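/- arXiv:2507.13740 — 3 statements merged into one kernel-verified Lean document; each statement's English description precedes it below -/
import Mathlib

section
/- Let p be a monic polynomial of degree d ≥ 2 with integer coefficients. There exists a constant C > 0, depending only on d, such that for every square-summable complex sequence (c_k)_{k ∈ ℤ}, one has ∑_{k,l ∈ ℤ} |c_k||c_l| / (1 + |p(k) − p(l)|) ≤ C ∑_{k ∈ ℤ} |c_k|². -/
open Filter Polynomial
open scoped ENNReal

set_option maxHeartbeats 1000000

lemma tail_bound (v : ℕ → ℤ) (hv : ∀ i, v i + (i + 1) ≤ v (i + 1)) (a : ℤ) :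
    ∑' i : ℕ, ENNReal.ofReal (1 / (1 + |((v i - a : ℤ) : ℝ)|)) ≤
      ∑' j : ℤ, ENNReal.ofReal (8 / (1 + (j : ℝ) ^ 2)) := by
  -- quadratic growth
  have key : ∀ i t : ℕ, 2 * v i + (t : ℤ) * (t + 1) ≤ 2 * v (i + t) := by
    intro i t
    induction t with
    | zero => simp
    | succ t ih =>
      have h1 := hv (i + t)
      have he : i + (t + 1) = (i + t) + 1 := rfl
      rw [he]
      have hi : (0 : ℤ) ≤ (i : ℤ) := Int.natCast_nonneg i
      push_cast at h1 ih ⊢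
      nlinarith [h1, ih, hi]
  have hex : ∃ i : ℕ, a ≤ v i := by
    refine ⟨2 * (a - v 0).toNat, ?_⟩
    have h1 := key 0 (2 * (a - v 0).toNat)
    have h2 : (a - v 0) ≤ ((a - v 0).toNat : ℤ) := Int.self_le_toNat _
    have h3 : (0 : ℤ) ≤ ((a - v 0).toNat : ℤ) := Int.natCast_nonneg _
    simp only [zero_add] at h1
    push_cast at h1
    nlinarith [h1, h2, h3, sq_nonneg ((a - v 0).toNat : ℤ)]
  classical
  set m := Nat.find hex with hm_def
  have hm : a ≤ v m := Nat.find_spec hex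
  have hm' : ∀ i, i < m → v i < a := fun i hi => not_le.mp (Nat.find_min hex hi)
  -- pointwise integer bound
  have hpt : ∀ i : ℕ, (1 + ((i : ℤ) - m) ^ 2) ≤ 8 * (1 + |v i - a|) := by
    intro i
    rcases le_or_gt m i with h | h
    · obtain ⟨t, rfl⟩ : ∃ t, i = m + t := ⟨i - m, by omega⟩
      have h1 := key m t
      have habs : (v (m + t) - a) ≤ |v (m + t) - a| := le_abs_self _
      have hc : ((m + t : ℕ) : ℤ) - m = (t : ℤ) := by push_cast; ring
      rw [hc]
      nlinarith [h1, habs, hm]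
    · have hmpos : 0 < m := lt_of_le_of_lt (Nat.zero_le i) h
      obtain ⟨t, ht⟩ : ∃ t, m - 1 = i + t := ⟨m - 1 - i, by omega⟩
      have h1 := key i t
      rw [← ht] at h1
      have h2 : v (m - 1) < a := hm' _ (by omega)
      have h3 : v i < a := hm' _ h
      have habs : |v i - a| = a - v i := by
        rw [abs_of_nonpos (by omega)]; ring
      have hcast : ((i : ℤ) - m) ^ 2 = ((t : ℤ) + 1) ^ 2 := by
        have hmn : (m : ℕ) = i + t + 1 := by omega
        have : (m : ℤ) = (i : ℤ) + t + 1 := by exact_mod_cast congrArg (Nat.cast : ℕ → ℤ) hmn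
        rw [this]; ring
      rw [habs, hcast]
      nlinarith [h1, h2, h3]
  -- pass to real / ENNReal
  have hpt' : ∀ i : ℕ, ENNReal.ofReal (1 / (1 + |((v i - a : ℤ) : ℝ)|)) ≤
      ENNReal.ofReal (8 / (1 + (((i : ℤ) - m : ℤ) : ℝ) ^ 2)) := by
    intro i
    apply ENNReal.ofReal_le_ofReal
    have h1 : (0 : ℝ) < 1 + |((v i - a : ℤ) : ℝ)| := by positivity
    have h2 : (0 : ℝ) < 1 + (((i : ℤ) - m : ℤ) : ℝ) ^ 2 := by positivity
    rw [div_le_div_iff₀ h1 h2]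
    have hcast : (1 : ℝ) + (((i : ℤ) - m : ℤ) : ℝ) ^ 2 ≤ 8 * (1 + |((v i - a : ℤ) : ℝ)|) := by
      rw [← Int.cast_abs]
      exact_mod_cast hpt i
    linarith
  calc ∑' i : ℕ, ENNReal.ofReal (1 / (1 + |((v i - a : ℤ) : ℝ)|))
      ≤ ∑' i : ℕ, ENNReal.ofReal (8 / (1 + (((i : ℤ) - m : ℤ) : ℝ) ^ 2)) :=
        ENNReal.tsum_le_tsum hpt'
    _ ≤ ∑' j : ℤ, ENNReal.ofReal (8 / (1 + (j : ℝ) ^ 2)) := by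
        have hinj : Function.Injective (fun i : ℕ => (i : ℤ) - m) := by
          intro i j hij
          simpa using hij
        exact ENNReal.tsum_comp_le_tsum_of_injective hinj
          (fun j => ENNReal.ofReal (8 / (1 + (j : ℝ) ^ 2)))

lemma K_ne_top : (∑' j : ℤ, ENNReal.ofReal (8 / (1 + (j : ℝ) ^ 2))) ≠ ⊤ := by
  have hnat : Summable (fun n : ℕ => 1 / (1 + (n : ℝ) ^ 2)) := by
    have hb : Summable (fun n : ℕ => 1 / ((n : ℝ) + 1) ^ 2) := by
      have := (summable_nat_add_iff (f := fun n : ℕ => 1 / (n : ℝ) ^ 2) 1).mpr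
        (Real.summable_one_div_nat_pow.mpr one_lt_two)
      exact this.congr (fun n => by push_cast; ring)
    apply (hb.mul_left 2).of_nonneg_of_le (fun n => by positivity)
    intro n
    rw [mul_one_div, div_le_div_iff₀ (by positivity) (by positivity)]
    nlinarith [sq_nonneg ((n : ℝ) - 1)]
  have hs : Summable (fun j : ℤ => 8 / (1 + (j : ℝ) ^ 2)) := by
    have hneg : Summable (fun n : ℕ => 1 / (1 + ((-(n : ℤ) : ℤ) : ℝ) ^ 2)) :=
      hnat.congr (fun n => by push_cast; ring_nf)
    have h1 : Summable (fun j : ℤ => 1 / (1 + (j : ℝ) ^ 2)) :=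
      Summable.of_nat_of_neg hnat hneg
    exact h1.mul_left 8 |>.congr (fun j => by rw [mul_one_div])
  rw [← ENNReal.ofReal_tsum_of_nonneg (fun j => by positivity) hs]
  exact ENNReal.ofReal_ne_top

lemma poly_gap (p : Polynomial ℝ) {d : ℕ} (hm : p.Monic) (hd : 2 ≤ d)
    (hdeg : p.natDegree = d) :
    ∃ M : ℕ, 1 ≤ M ∧ ∀ x : ℝ, (M : ℝ) ≤ x → p.eval x + x ≤ p.eval (x + 1) := by
  set D : Polynomial ℝ := derivative p - X with hD
  have hcoeffd : D.coeff (d - 1) = (d : ℝ) - (if d - 1 = 1 then 1 else 0) := by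
    rw [hD, coeff_sub, coeff_derivative, coeff_X]
    have h1 : d - 1 + 1 = d := by omega
    have h2 : p.coeff d = 1 := by
      have := hm.coeff_natDegree
      rwa [hdeg] at this
    rw [h1, h2]
    have hc2 : ((d - 1 : ℕ) : ℝ) = (d : ℝ) - 1 := by
      rw [Nat.cast_sub (by omega : 1 ≤ d)]; simp
    have hite : (if 1 = d - 1 then (1 : ℝ) else 0) = (if d - 1 = 1 then (1 : ℝ) else 0) := by
      simp [eq_comm]
    rw [hc2, hite]
    ring
  have hpos : 0 < D.coeff (d - 1) := by
    rw [hcoeffd]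
    have : (2 : ℝ) ≤ (d : ℝ) := by exact_mod_cast hd
    by_cases h : d - 1 = 1 <;> simp [h] <;> linarith
  have hne : D ≠ 0 := fun h => by simp [h] at hpos
  have hDle : D.natDegree ≤ d - 1 := by
    apply (natDegree_sub_le _ _).trans
    apply max_le
    · rw [← hdeg] at *
      exact natDegree_derivative_le p
    · simp [natDegree_X]; omega
  have hDdeg : D.natDegree = d - 1 :=
    le_antisymm hDle (le_natDegree_of_ne_zero (ne_of_gt hpos))
  have hlc : 0 < D.leadingCoeff := by
    rwa [leadingCoeff, hDdeg]
  have hdegpos : 0 < D.degree := by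
    rw [← natDegree_pos_iff_degree_pos, hDdeg]
    omega
  have ht : Tendsto (fun x => D.eval x) atTop atTop :=
    D.tendsto_atTop_of_leadingCoeff_nonneg hdegpos hlc.le
  have hev : ∀ᶠ x : ℝ in atTop, 0 ≤ D.eval x := ht.eventually_ge_atTop 0
  obtain ⟨N, hN⟩ := eventually_atTop.mp hev
  refine ⟨max 1 ⌈N⌉₊, le_max_left _ _, ?_⟩
  intro x hx
  have hx1 : (1 : ℝ) ≤ x := by
    have : (1 : ℝ) ≤ ((max 1 ⌈N⌉₊ : ℕ) : ℝ) := by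
      exact_mod_cast Nat.one_le_cast.mpr (le_max_left 1 ⌈N⌉₊)
    linarith
  have hxN : N ≤ x := by
    have : (⌈N⌉₊ : ℝ) ≤ (max 1 ⌈N⌉₊ : ℕ) := by exact_mod_cast le_max_right 1 ⌈N⌉₊
    linarith [Nat.le_ceil N, this, hx]
  obtain ⟨c, hc, hceq⟩ := exists_hasDerivAt_eq_slope (fun y => p.eval y)
    (fun y => (derivative p).eval y) (by linarith : x < x + 1)
    (p.continuousOn) (fun y _ => p.hasDerivAt y)
  have hc1 : x < c := hc.1
  have hcD : 0 ≤ D.eval c := hN c (by linarith)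
  rw [hD] at hcD
  simp only [eval_sub, eval_X] at hcD
  have hslope : (derivative p).eval c = p.eval (x + 1) - p.eval x := by
    rw [hceq]; field_simp; ring
  linarith [hcD, hslope.symm.le]

lemma nat_split (F : ℕ → ℝ≥0∞) (hF : ∀ i, F i ≤ 1) (M : ℕ) :
    ∑' i : ℕ, F i ≤ M + ∑' i : ℕ, F (M + i) := by
  classical
  have hle : ∀ i, F i ≤ (if i < M then (1 : ℝ≥0∞) else 0) + (if M ≤ i then F i else 0) := by
    intro i
    rcases lt_or_ge i M with h | h
    · simpa [h, not_le.mpr h] using hF i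
    · simp [h, not_lt.mpr h]
  calc ∑' i, F i ≤ ∑' i, ((if i < M then (1 : ℝ≥0∞) else 0) + (if M ≤ i then F i else 0)) :=
        ENNReal.tsum_le_tsum hle
    _ = (∑' i, (if i < M then (1 : ℝ≥0∞) else 0)) + ∑' i, (if M ≤ i then F i else 0) :=
        ENNReal.tsum_add
    _ ≤ M + ∑' i, F (M + i) := by
        refine add_le_add ?_ ?_
        · have h1 : (∑' i, (if i < M then (1 : ℝ≥0∞) else 0))
              = ∑ i ∈ Finset.range M, (if i < M then (1 : ℝ≥0∞) else 0) := by
            apply tsum_eq_sum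
            intro i hi
            simp only [Finset.mem_range, not_lt] at hi
            simp [not_lt.mpr hi]
          rw [h1]
          calc ∑ i ∈ Finset.range M, (if i < M then (1 : ℝ≥0∞) else 0)
              ≤ ∑ _i ∈ Finset.range M, (1 : ℝ≥0∞) :=
                Finset.sum_le_sum (fun i _ => by split <;> simp)
            _ = M := by simp
        · have heq : (∑' i, (if M ≤ i then F i else 0))
              = ∑' i, (if M ≤ M + i then F (M + i) else 0) := by
            refine (Function.Injective.tsum_eq (g := fun i : ℕ => M + i) ?_ ?_).symm
            · intro i j hij
              simpa using hij
            · intro x hx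
              simp only [Function.mem_support] at hx
              have hMx : M ≤ x := by by_contra hcon; simp [hcon] at hx
              exact ⟨x - M, by simp; omega⟩
          rw [heq]
          refine ENNReal.tsum_le_tsum (fun i => ?_)
          simp

lemma row_bound (d : ℕ) (hd : 2 ≤ d) (P : Polynomial ℤ) (hP : P.Monic)
    (hdeg : P.natDegree = d) :
    ∃ S : ℝ≥0∞, S ≠ ⊤ ∧ ∀ a : ℤ,
      ∑' l : ℤ, ENNReal.ofReal (1 / (1 + |((P.eval l - a : ℤ) : ℝ)|)) ≤ S := by
  classical
  set K := ∑' j : ℤ, ENNReal.ofReal (8 / (1 + (j : ℝ) ^ 2)) with hK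
  set pr : Polynomial ℝ := P.map (Int.castRingHom ℝ) with hpr
  have hprm : pr.Monic := hP.map _
  have hprdeg : pr.natDegree = d := by
    rw [hpr, hP.natDegree_map, hdeg]
  have heval : ∀ n : ℤ, pr.eval (n : ℝ) = ((P.eval n : ℤ) : ℝ) := by
    intro n
    rw [hpr, eval_intCast_map]
    simp
  obtain ⟨MR, hMR1, hMR⟩ := poly_gap pr hprm hd hprdeg
  set pl : Polynomial ℝ := C ((-1 : ℝ) ^ d) * pr.comp (-X) with hpl
  have hXne : ((-X : Polynomial ℝ)).natDegree ≠ 0 := by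
    simp [natDegree_neg, natDegree_X]
  have hcompdeg : (pr.comp (-X)).natDegree = d := by
    rw [natDegree_comp, natDegree_neg, natDegree_X, hprdeg, mul_one]
  have hcomplc : (pr.comp (-X)).leadingCoeff = (-1 : ℝ) ^ d := by
    rw [leadingCoeff_comp hXne, hprm.leadingCoeff, leadingCoeff_neg, leadingCoeff_X, hprdeg]
    ring
  have hplm : pl.Monic := by
    show pl.leadingCoeff = 1
    rw [hpl, leadingCoeff_mul, leadingCoeff_C, hcomplc, ← mul_pow]
    norm_num
  have hpldeg : pl.natDegree = d := by
    rw [hpl, natDegree_C_mul (pow_ne_zero _ (by norm_num : (-1 : ℝ) ≠ 0)), hcompdeg]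
  have hpleval : ∀ x : ℝ, pl.eval x = (-1 : ℝ) ^ d * pr.eval (-x) := by
    intro x
    rw [hpl]
    simp [eval_comp]
  obtain ⟨ML, hML1, hML⟩ := poly_gap pl hplm hd hpldeg
  set M := max MR ML with hM
  have hM1 : 1 ≤ M := le_trans hMR1 (le_max_left _ _)
  have hM1' : (1 : ℝ) ≤ (M : ℝ) := by exact_mod_cast hM1
  refine ⟨((M : ℝ≥0∞) + K) + ((M : ℝ≥0∞) + K), ?_, ?_⟩
  · have hMne : (M : ℝ≥0∞) ≠ ⊤ := ENNReal.natCast_ne_top M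
    exact ENNReal.add_ne_top.mpr ⟨ENNReal.add_ne_top.mpr ⟨hMne, K_ne_top⟩,
      ENNReal.add_ne_top.mpr ⟨hMne, K_ne_top⟩⟩
  intro a
  set h : ℤ → ℝ≥0∞ := fun l => ENNReal.ofReal (1 / (1 + |((P.eval l - a : ℤ) : ℝ)|)) with hh
  have hone : ∀ l, h l ≤ 1 := by
    intro l
    rw [hh]
    simp only
    rw [← ENNReal.ofReal_one]
    apply ENNReal.ofReal_le_ofReal
    rw [div_le_one (by positivity)]
    simp [abs_nonneg]
  have hsplit : ∑' l : ℤ, h l = (∑' i : ℕ, h i) + ∑' i : ℕ, h (Int.negSucc i) := by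
    have h1 : ∑' l : ℤ, h l
        = ∑' l : ℤ, (Int.rec (fun i : ℕ => h i) (fun i : ℕ => h (Int.negSucc i)) l : ℝ≥0∞) := by
      congr 1
      funext l
      cases l <;> rfl
    rw [h1, tsum_int_rec ENNReal.summable ENNReal.summable]
  rw [hsplit]
  -- positive side
  have hgapR : ∀ i : ℕ, P.eval ((M : ℤ) + i) + ((i : ℤ) + 1) ≤ P.eval ((M : ℤ) + i + 1) := by
    intro i
    have hi : (0 : ℝ) ≤ (i : ℝ) := Nat.cast_nonneg i
    have hx : (MR : ℝ) ≤ (((M : ℤ) + i : ℤ) : ℝ) := by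
      push_cast
      have : (MR : ℝ) ≤ (M : ℝ) := by exact_mod_cast le_max_left MR ML
      linarith
    have h0 := hMR (((M : ℤ) + i : ℤ) : ℝ) hx
    rw [heval, show ((((M : ℤ) + i : ℤ)) : ℝ) + 1 = (((M : ℤ) + i + 1 : ℤ) : ℝ) from by
      push_cast; ring, heval] at h0
    have hZ : ((P.eval ((M : ℤ) + i) + ((i : ℤ) + 1) : ℤ) : ℝ)
        ≤ ((P.eval ((M : ℤ) + i + 1) : ℤ) : ℝ) := by
      push_cast at h0 ⊢
      linarith
    exact_mod_cast hZ
  have hpos_side : (∑' i : ℕ, h i) ≤ (M : ℝ≥0∞) + K := by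
    refine le_trans (nat_split (fun i => h i) (fun i => hone _) M) ?_
    refine add_le_add le_rfl ?_
    refine le_trans (ENNReal.tsum_le_tsum (fun i => le_of_eq ?_))
      (tail_bound (fun i : ℕ => P.eval ((M : ℤ) + i)) ?_ a)
    · have harg : ((M + i : ℕ) : ℤ) = (M : ℤ) + i := by push_cast; ring
      simp only [hh, harg]
    · intro i
      have hcast : ((i + 1 : ℕ) : ℤ) = (i : ℤ) + 1 := by push_cast; ring
      simp only [hcast]
      rw [show (M : ℤ) + ((i : ℤ) + 1) = (M : ℤ) + i + 1 from by ring]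
      exact hgapR i
  -- negative side
  have hgapL : ∀ i : ℕ, (-1 : ℤ) ^ d * P.eval (-(M : ℤ) - 1 - i) + ((i : ℤ) + 1)
      ≤ (-1 : ℤ) ^ d * P.eval (-(M : ℤ) - 1 - i - 1) := by
    intro i
    have hi : (0 : ℝ) ≤ (i : ℝ) := Nat.cast_nonneg i
    have hx : (ML : ℝ) ≤ (M : ℝ) + 1 + i := by
      have : (ML : ℝ) ≤ (M : ℝ) := by exact_mod_cast le_max_right MR ML
      linarith
    have h0 := hML ((M : ℝ) + 1 + i) hx
    rw [hpleval, hpleval] at h0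
    rw [show -((M : ℝ) + 1 + (i : ℝ)) = ((-(M : ℤ) - 1 - i : ℤ) : ℝ) from by push_cast; ring,
      show -((M : ℝ) + 1 + (i : ℝ) + 1) = ((-(M : ℤ) - 1 - i - 1 : ℤ) : ℝ) from by
        push_cast; ring, heval, heval] at h0
    have hZ : (((-1 : ℤ) ^ d * P.eval (-(M : ℤ) - 1 - i) + ((i : ℤ) + 1) : ℤ) : ℝ)
        ≤ (((-1 : ℤ) ^ d * P.eval (-(M : ℤ) - 1 - i - 1) : ℤ) : ℝ) := by
      push_cast at h0 ⊢
      linarith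
    exact_mod_cast hZ
  have hneg_side : (∑' i : ℕ, h (Int.negSucc i)) ≤ (M : ℝ≥0∞) + K := by
    refine le_trans (nat_split (fun i => h (Int.negSucc i)) (fun i => hone _) M) ?_
    refine add_le_add le_rfl ?_
    refine le_trans (ENNReal.tsum_le_tsum (fun i => le_of_eq ?_))
      (tail_bound (fun i : ℕ => (-1 : ℤ) ^ d * P.eval (-(M : ℤ) - 1 - i)) ?_ ((-1 : ℤ) ^ d * a))
    · have harg : Int.negSucc (M + i) = -(M : ℤ) - 1 - i := by
        rw [Int.negSucc_eq]; push_cast; ring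
      have habs : |((P.eval (-(M : ℤ) - 1 - i) - a : ℤ) : ℝ)|
          = |(((-1 : ℤ) ^ d * P.eval (-(M : ℤ) - 1 - i) - (-1 : ℤ) ^ d * a : ℤ) : ℝ)| := by
        rw [← Int.cast_abs, ← Int.cast_abs]
        congr 1
        rw [← mul_sub, abs_mul, abs_pow, abs_neg, abs_one, one_pow, one_mul]
      simp only [hh, harg]
      rw [habs]
    · intro i
      have hcast : ((i + 1 : ℕ) : ℤ) = (i : ℤ) + 1 := by push_cast; ring
      simp only [hcast]
      rw [show -(M : ℤ) - 1 - ((i : ℤ) + 1) = -(M : ℤ) - 1 - i - 1 from by ring]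
      exact hgapL i
  exact add_le_add hpos_side hneg_side


/-- Schur-type bound: for a monic integer polynomial `P` of degree `d ≥ 2`, there is
`C > 0` (depending only on `d`) with
`∑_{k,l} ‖c k‖ ‖c l‖ / (1 + |P(k) - P(l)|) ≤ C ∑_k ‖c k‖²` for all `(c_k) ∈ ℓ²(ℤ)`. -/
theorem stmt2 (d : ℕ) (hd : 2 ≤ d) (P : Polynomial ℤ) (hP : P.Monic)
    (hdeg : P.natDegree = d) :
    ∃ C : ℝ, 0 < C ∧ ∀ c : ℤ → ℂ, Summable (fun k => ‖c k‖ ^ 2) →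
      ∑' q : ℤ × ℤ, ‖c q.1‖ * ‖c q.2‖ / (1 + |((P.eval q.1 - P.eval q.2 : ℤ) : ℝ)|) ≤
        C * ∑' k : ℤ, ‖c k‖ ^ 2 := by
  classical
  obtain ⟨S, hSne, hS⟩ := row_bound d hd P hP hdeg
  refine ⟨S.toReal + 1, by positivity, ?_⟩
  intro c hc
  set Sig := ∑' k : ℤ, ‖c k‖ ^ 2 with hSig
  have hSig0 : 0 ≤ Sig := tsum_nonneg (fun k => sq_nonneg _)
  set f : ℤ × ℤ → ℝ :=
    fun q => ‖c q.1‖ * ‖c q.2‖ / (1 + |((P.eval q.1 - P.eval q.2 : ℤ) : ℝ)|) with hf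
  have hf0 : ∀ q, 0 ≤ f q := fun q => by
    rw [hf]; positivity
  by_cases hsum : Summable f
  · -- ENNReal computation
    have hsum2 : Summable (fun k : ℤ => ‖c k‖ ^ 2 / 2) := hc.div_const 2
    have hA : (∑' k : ℤ, ENNReal.ofReal (‖c k‖ ^ 2 / 2)) = ENNReal.ofReal (Sig / 2) := by
      rw [← ENNReal.ofReal_tsum_of_nonneg (fun k => by positivity) hsum2]
      congr 1
      rw [hSig]
      exact tsum_div_const
    have hpt : ∀ q : ℤ × ℤ, ENNReal.ofReal (f q) ≤
        ENNReal.ofReal (‖c q.1‖ ^ 2 / 2) *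
          ENNReal.ofReal (1 / (1 + |((P.eval q.1 - P.eval q.2 : ℤ) : ℝ)|)) +
        ENNReal.ofReal (‖c q.2‖ ^ 2 / 2) *
          ENNReal.ofReal (1 / (1 + |((P.eval q.1 - P.eval q.2 : ℤ) : ℝ)|)) := by
      intro q
      have hD : (0 : ℝ) < 1 + |((P.eval q.1 - P.eval q.2 : ℤ) : ℝ)| := by positivity
      rw [show f q = (‖c q.1‖ * ‖c q.2‖) *
          (1 / (1 + |((P.eval q.1 - P.eval q.2 : ℤ) : ℝ)|)) from by rw [hf, mul_one_div],
        ENNReal.ofReal_mul (by positivity), ← add_mul]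
      refine mul_le_mul' ?_ le_rfl
      calc ENNReal.ofReal (‖c q.1‖ * ‖c q.2‖)
          ≤ ENNReal.ofReal (‖c q.1‖ ^ 2 / 2 + ‖c q.2‖ ^ 2 / 2) :=
            ENNReal.ofReal_le_ofReal (by nlinarith [sq_nonneg (‖c q.1‖ - ‖c q.2‖)])
        _ = ENNReal.ofReal (‖c q.1‖ ^ 2 / 2) + ENNReal.ofReal (‖c q.2‖ ^ 2 / 2) :=
            ENNReal.ofReal_add (by positivity) (by positivity)
    have h_u : (∑' q : ℤ × ℤ, ENNReal.ofReal (‖c q.1‖ ^ 2 / 2) *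
        ENNReal.ofReal (1 / (1 + |((P.eval q.1 - P.eval q.2 : ℤ) : ℝ)|)))
        ≤ ENNReal.ofReal (Sig / 2) * S := by
      rw [ENNReal.tsum_prod']
      have hrow : ∀ k : ℤ,
          (∑' l : ℤ, ENNReal.ofReal (1 / (1 + |((P.eval k - P.eval l : ℤ) : ℝ)|))) ≤ S := by
        intro k
        refine le_trans (le_of_eq (tsum_congr (fun l => ?_))) (hS (P.eval k))
        congr 3
        rw [← Int.cast_abs, ← Int.cast_abs, abs_sub_comm]
      calc (∑' (k : ℤ) (l : ℤ), ENNReal.ofReal (‖c k‖ ^ 2 / 2) *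
            ENNReal.ofReal (1 / (1 + |((P.eval k - P.eval l : ℤ) : ℝ)|)))
          = ∑' k : ℤ, ENNReal.ofReal (‖c k‖ ^ 2 / 2) *
            ∑' l : ℤ, ENNReal.ofReal (1 / (1 + |((P.eval k - P.eval l : ℤ) : ℝ)|)) :=
            tsum_congr (fun k => ENNReal.tsum_mul_left)
        _ ≤ ∑' k : ℤ, ENNReal.ofReal (‖c k‖ ^ 2 / 2) * S :=
            ENNReal.tsum_le_tsum (fun k => mul_le_mul' le_rfl (hrow k))
        _ = (∑' k : ℤ, ENNReal.ofReal (‖c k‖ ^ 2 / 2)) * S := ENNReal.tsum_mul_right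
        _ = ENNReal.ofReal (Sig / 2) * S := by rw [hA]
    have h_w : (∑' q : ℤ × ℤ, ENNReal.ofReal (‖c q.2‖ ^ 2 / 2) *
        ENNReal.ofReal (1 / (1 + |((P.eval q.1 - P.eval q.2 : ℤ) : ℝ)|)))
        ≤ ENNReal.ofReal (Sig / 2) * S := by
      rw [ENNReal.tsum_prod', ENNReal.tsum_comm]
      calc (∑' (l : ℤ) (k : ℤ), ENNReal.ofReal (‖c l‖ ^ 2 / 2) *
            ENNReal.ofReal (1 / (1 + |((P.eval k - P.eval l : ℤ) : ℝ)|)))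
          = ∑' l : ℤ, ENNReal.ofReal (‖c l‖ ^ 2 / 2) *
            ∑' k : ℤ, ENNReal.ofReal (1 / (1 + |((P.eval k - P.eval l : ℤ) : ℝ)|)) :=
            tsum_congr (fun l => ENNReal.tsum_mul_left)
        _ ≤ ∑' l : ℤ, ENNReal.ofReal (‖c l‖ ^ 2 / 2) * S :=
            ENNReal.tsum_le_tsum (fun l => mul_le_mul' le_rfl (hS (P.eval l)))
        _ = (∑' l : ℤ, ENNReal.ofReal (‖c l‖ ^ 2 / 2)) * S := ENNReal.tsum_mul_right
        _ = ENNReal.ofReal (Sig / 2) * S := by rw [hA]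
    have key : (∑' q : ℤ × ℤ, ENNReal.ofReal (f q))
        ≤ ENNReal.ofReal (Sig / 2) * S + ENNReal.ofReal (Sig / 2) * S := by
      calc (∑' q : ℤ × ℤ, ENNReal.ofReal (f q))
          ≤ ∑' q : ℤ × ℤ, (ENNReal.ofReal (‖c q.1‖ ^ 2 / 2) *
              ENNReal.ofReal (1 / (1 + |((P.eval q.1 - P.eval q.2 : ℤ) : ℝ)|)) +
            ENNReal.ofReal (‖c q.2‖ ^ 2 / 2) *
              ENNReal.ofReal (1 / (1 + |((P.eval q.1 - P.eval q.2 : ℤ) : ℝ)|))) :=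
            ENNReal.tsum_le_tsum hpt
        _ = _ + _ := ENNReal.tsum_add
        _ ≤ _ := add_le_add h_u h_w
    -- convert back to ℝ
    have hofS : S = ENNReal.ofReal S.toReal := (ENNReal.ofReal_toReal hSne).symm
    have hrhs : ENNReal.ofReal (Sig / 2) * S + ENNReal.ofReal (Sig / 2) * S
        ≤ ENNReal.ofReal ((S.toReal + 1) * Sig) := by
      conv_lhs => rw [hofS]
      rw [← ENNReal.ofReal_mul (by positivity), ← ENNReal.ofReal_add (by positivity)
        (by positivity)]
      apply ENNReal.ofReal_le_ofReal
      have hst : 0 ≤ S.toReal := ENNReal.toReal_nonneg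
      nlinarith
    have hlhs : ENNReal.ofReal (∑' q : ℤ × ℤ, f q) = ∑' q : ℤ × ℤ, ENNReal.ofReal (f q) :=
      ENNReal.ofReal_tsum_of_nonneg hf0 hsum
    have hfinal : ENNReal.ofReal (∑' q : ℤ × ℤ, f q)
        ≤ ENNReal.ofReal ((S.toReal + 1) * Sig) := by
      rw [hlhs]
      exact le_trans key hrhs
    have := (ENNReal.ofReal_le_ofReal_iff (by positivity)).mp hfinal
    exact this
  · rw [show (∑' q : ℤ × ℤ, ‖c q.1‖ * ‖c q.2‖ /
      (1 + |((P.eval q.1 - P.eval q.2 : ℤ) : ℝ)|)) = ∑' q, f q from rfl,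
      tsum_eq_zero_of_not_summable hsum]
    positivity
end

section
/- Let p be a monic integer polynomial of degree d ≥ 2 and T > 0. There is a constant C > 0, depending only on d and T, such that for every u₀ ∈ L²(𝕋), the solution u(t,x) = ∑_k û₀(k) e^{i(kx + p(k)t)} of ∂_t u = iP(D)u satisfies sup_{x ∈ 𝕋} (∫₀^T |u(t,x)|² dt)^{1/2} ≤ C ‖u₀‖_{L²(𝕋)}. -/
open MeasureTheory Real

open Polynomial Filter Asymptotics in
lemma gap_lemma (P : Polynomial ℤ) (hP : P.Monic) (d : ℕ) (hd : 2 ≤ d)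
    (hdeg : P.natDegree = d) :
    ∃ M : ℕ, 1 ≤ M ∧ ∀ m : ℕ, M ≤ m → (m : ℤ) ≤ P.eval ((m : ℤ) + 1) - P.eval (m : ℤ) := by
  have h1 : d - 1 + 1 = d := by omega
  set pR : Polynomial ℝ := P.map (Int.castRingHom ℝ) with hpR
  have hmonic : pR.Monic := hP.map _
  have hdegR : pR.natDegree = d := by rw [hP.natDegree_map, hdeg]
  set q := derivative pR with hq
  have hco : q.coeff (d - 1) = (d : ℝ) := by
    rw [hq, Polynomial.coeff_derivative, h1]
    have hc : pR.coeff d = 1 := by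
      have := hmonic.leadingCoeff
      rwa [Polynomial.leadingCoeff, hdegR] at this
    rw [hc, one_mul]
    exact_mod_cast congrArg (Nat.cast : ℕ → ℝ) h1
  have hdq : q.natDegree = d - 1 := by
    refine le_antisymm (by have := Polynomial.natDegree_derivative_le pR; rw [hdegR] at this; exact this) ?_
    refine Polynomial.le_natDegree_of_ne_zero ?_
    rw [hco]
    positivity
  have hlq : q.leadingCoeff = (d : ℝ) := by rw [Polynomial.leadingCoeff, hdq, hco]
  have hequiv := q.isEquivalent_atTop_lead
  rw [hdq, hlq] at hequiv
  have hev : ∀ᶠ x : ℝ in atTop, x ≤ q.eval x := by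
    filter_upwards [hequiv.isLittleO.def (by norm_num : (0:ℝ) < 1/2), eventually_ge_atTop (1:ℝ)]
      with x hx hx1
    have hxpos : (0:ℝ) ≤ x := le_trans zero_le_one hx1
    have hgpos : (0:ℝ) ≤ (d:ℝ) * x ^ (d-1) := by positivity
    have h2 : |q.eval x - (d:ℝ) * x ^ (d-1)| ≤ 1/2 * ((d:ℝ) * x ^ (d-1)) := by
      simpa [Real.norm_eq_abs, abs_of_nonneg hxpos, abs_of_nonneg hgpos] using hx
    have h3 : (d:ℝ)/2 * x ^ (d-1) ≤ q.eval x := by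
      have := abs_le.mp h2
      nlinarith
    have h4 : x ≤ x ^ (d - 1) := by
      calc x = x ^ 1 := (pow_one x).symm
      _ ≤ x ^ (d-1) := pow_le_pow_right₀ hx1 (by omega)
    have hd2 : (1:ℝ) ≤ (d:ℝ)/2 := by
      have : (2:ℝ) ≤ (d:ℝ) := by exact_mod_cast hd
      linarith
    have hp0 : (0:ℝ) ≤ x ^ (d-1) := pow_nonneg hxpos _
    calc x ≤ x ^ (d-1) := h4
    _ ≤ (d:ℝ)/2 * x ^ (d-1) := by nlinarith
    _ ≤ q.eval x := h3
  obtain ⟨x₀, hx₀⟩ := eventually_atTop.mp hev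
  refine ⟨max 1 ⌈x₀⌉₊, le_max_left _ _, fun m hm => ?_⟩
  have hm1 : 1 ≤ m := le_trans (le_max_left _ _) hm
  have hmx0 : x₀ ≤ (m : ℝ) := by
    calc x₀ ≤ (⌈x₀⌉₊ : ℝ) := Nat.le_ceil x₀
    _ ≤ (m : ℝ) := by exact_mod_cast le_trans (le_max_right _ _) hm
  obtain ⟨ξ, hξ, hslope⟩ := exists_hasDerivAt_eq_slope (fun x => pR.eval x) (fun x => q.eval x)
    (lt_add_one (m:ℝ)) (pR.continuous_aeval).continuousOn (fun x _ => pR.hasDerivAt x)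
  have hξm : (m:ℝ) ≤ ξ := le_of_lt hξ.1
  have hqξ : ξ ≤ q.eval ξ := hx₀ ξ (le_trans hmx0 hξm)
  have hval : q.eval ξ = pR.eval ((m:ℝ)+1) - pR.eval (m:ℝ) := by
    have := hslope
    simp only [add_sub_cancel_left, div_one] at this
    exact this
  have hcast : ∀ n : ℤ, pR.eval ((n:ℤ) : ℝ) = ((P.eval n : ℤ) : ℝ) := by
    intro n
    exact Polynomial.eval_intCast_map (Int.castRingHom ℝ) P n
  have hfin : (m:ℝ) ≤ ((P.eval ((m:ℤ)+1) - P.eval (m:ℤ) : ℤ) : ℝ) := by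
    have e1 : pR.eval ((m:ℝ)+1) = ((P.eval ((m:ℤ)+1) : ℤ) : ℝ) := by
      have := hcast ((m:ℤ)+1); push_cast at this ⊢; exact this
    have e2 : pR.eval ((m:ℝ)) = ((P.eval ((m:ℤ)) : ℤ) : ℝ) := by
      have := hcast (m:ℤ); push_cast at this ⊢; exact this
    push_cast
    rw [← e1, ← e2]
    calc (m:ℝ) ≤ ξ := hξm
    _ ≤ q.eval ξ := hqξ
    _ = _ := hval
  exact_mod_cast hfin

noncomputable def wfun (T : ℝ) (j : ℤ) : ℝ := if j = 0 then T else min T (2 / |(j:ℝ)|)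

lemma wfun_nonneg {T : ℝ} (hT : 0 < T) (j : ℤ) : 0 ≤ wfun T j := by
  unfold wfun; split
  · exact hT.le
  · exact le_min hT.le (by positivity) |>.trans (min_le_min le_rfl le_rfl) |>.trans le_rfl

lemma wfun_le_T {T : ℝ} (hT : 0 < T) (j : ℤ) : wfun T j ≤ T := by
  unfold wfun; split
  · exact le_rfl
  · exact min_le_left _ _

lemma wfun_neg (T : ℝ) (j : ℤ) : wfun T (-j) = wfun T j := by
  unfold wfun
  simp [neg_eq_zero, abs_neg]

lemma wfun_le_div {T : ℝ} (j : ℤ) (hj : j ≠ 0) : wfun T j ≤ 2 / |(j:ℝ)| := by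
  unfold wfun
  rw [if_neg hj]
  exact min_le_right _ _

lemma sep_of_step (v : ℕ → ℤ) (hv : ∀ s : ℕ, (s:ℤ) + 1 ≤ v (s+1) - v s) :
    ∀ s t : ℕ, s < t → ((t:ℤ) - (s:ℤ))^2 ≤ 2*(v t - v s) := by
  intro s t hst
  induction t, hst using Nat.le_induction with
  | base =>
    have := hv s
    push_cast
    nlinarith [Int.ofNat_nonneg s]
  | succ t ht ih =>
    have h1 := hv t
    have hts : (s:ℤ) ≤ t := by exact_mod_cast Nat.le_of_succ_le ht
    push_cast at ih ⊢
    nlinarith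

noncomputable def Sig : ℝ := ∑' z : ℤ, (1:ℝ) / (z:ℝ)^2

lemma nat_part_summable : Summable (fun n : ℕ => (1:ℝ) / (n:ℝ)^2) := by
  exact_mod_cast Real.summable_one_div_nat_pow.mpr one_lt_two

lemma sig_summable : Summable (fun z : ℤ => (1:ℝ) / (z:ℝ)^2) := by
  rw [summable_int_iff_summable_nat_and_neg]
  constructor
  · simpa using nat_part_summable
  · simpa using nat_part_summable

lemma sig_nonneg : 0 ≤ Sig := tsum_nonneg (fun z => by positivity)

lemma sixteen_summable : Summable (fun z : ℤ => (16:ℝ) / (z:ℝ)^2) := by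
  have := sig_summable.mul_left (16:ℝ)
  simpa [div_eq_mul_inv, one_div, mul_assoc] using this

lemma sixteen_tsum : ∑' z : ℤ, (16:ℝ) / (z:ℝ)^2 = 16 * Sig := by
  rw [Sig, ← tsum_mul_left]
  congr 1; funext z; ring

lemma tail_lemma {T : ℝ} (hT : 0 < T) (v : ℕ → ℤ)
    (hsep : ∀ s t : ℕ, s < t → ((t:ℤ) - (s:ℤ))^2 ≤ 2*(v t - v s)) (A : ℤ) :
    Summable (fun s : ℕ => wfun T (v s - A)) ∧
      ∑' s : ℕ, wfun T (v s - A) ≤ 3*T + 16 * Sig := by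
  have hex : ∃ s : ℕ, A ≤ v s := by
    refine ⟨max 1 (2*(A - v 0)).toNat, ?_⟩
    set s := max 1 (2*(A - v 0)).toNat with hs
    have hs1 : 1 ≤ s := le_max_left _ _
    have hsep0 := hsep 0 s (by omega)
    have h2 : 2*(A - v 0) ≤ (s:ℤ) := by
      calc 2*(A - v 0) ≤ ((2*(A - v 0)).toNat : ℤ) := Int.self_le_toNat _
      _ ≤ (s:ℤ) := by exact_mod_cast le_max_right _ _
    have hs1' : (1:ℤ) ≤ (s:ℤ) := by exact_mod_cast hs1
    push_cast at hsep0
    nlinarith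
  classical
  set r₀ := Nat.find hex with hr₀
  have hAr : A ≤ v r₀ := Nat.find_spec hex
  have hlt : ∀ s : ℕ, s < r₀ → v s < A := fun s hs => by
    have := Nat.find_min hex hs
    omega
  set S : Finset ℕ := {r₀ - 1, r₀, r₀ + 1} with hS
  set F : ℕ → ℝ := fun s =>
    (if s ∈ S then T else 0) + 16 / (((s:ℤ) - (r₀:ℤ) : ℤ) : ℝ)^2 with hF
  have hbound : ∀ s : ℕ, wfun T (v s - A) ≤ F s := by
    intro s
    by_cases hnear : (s:ℤ) = (r₀:ℤ) - 1 ∨ (s:ℤ) = (r₀:ℤ) ∨ (s:ℤ) = (r₀:ℤ) + 1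
    · have hmem : s ∈ S := by
        simp only [hS, Finset.mem_insert, Finset.mem_singleton]
        omega
      have hFeq : F s = T + 16 / (((s:ℤ) - (r₀:ℤ) : ℤ) : ℝ)^2 := by rw [hF]; simp [hmem]
      rw [hFeq]
      have : (0:ℝ) ≤ 16 / (((s:ℤ) - (r₀:ℤ) : ℤ) : ℝ)^2 := by positivity
      linarith [wfun_le_T hT (v s - A)]
    · push_neg at hnear
      have hfar : (s:ℤ) ≤ (r₀:ℤ) - 2 ∨ (r₀:ℤ) + 2 ≤ (s:ℤ) := by omega
      have hFge : F s ≥ 16 / (((s:ℤ) - (r₀:ℤ) : ℤ) : ℝ)^2 := by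
        rw [hF]; simp only []; split <;> [linarith [hT.le]; linarith]
      refine le_trans ?_ hFge
      have hupos : (0:ℝ) < (((s:ℤ) - (r₀:ℤ) : ℤ) : ℝ)^2 := by
        have : (((s:ℤ) - (r₀:ℤ) : ℤ) : ℝ) ≠ 0 := by
          have : (s:ℤ) - (r₀:ℤ) ≠ 0 := by omega
          exact_mod_cast this
        positivity
      rcases hfar with hL | hR
      · -- below: s ≤ r₀ - 2
        have hr2 : 2 ≤ r₀ := by omega
        have hst : s < r₀ - 1 := by omega
        have hsep' := hsep s (r₀ - 1) hst
        have hvtA : v (r₀ - 1) < A := hlt _ (by omega)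
        have hvsA : v s < A := hlt s (by omega)
        have htz : ((r₀ - 1 : ℕ):ℤ) = (r₀:ℤ) - 1 := by omega
        have hlin : ((r₀ - 1 : ℕ):ℤ) - (s:ℤ) = -(((s:ℤ) - (r₀:ℤ)) + 1) := by omega
        rw [hlin, neg_sq] at hsep'
        have hkey : (((s:ℤ) - (r₀:ℤ)) + 1)^2 ≤ 2*((A - 1) - v s) := by omega
        have hne : v s - A ≠ 0 := by omega
        refine le_trans (wfun_le_div _ hne) ?_
        have habs : |((v s - A : ℤ) : ℝ)| = ((A - v s : ℤ) : ℝ) := by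
          rw [← Int.cast_abs]; congr 1
          rw [abs_of_neg (by omega : v s - A < 0)]; ring
        rw [habs]
        have hpos : (0:ℝ) < ((A - v s : ℤ) : ℝ) := by
          exact_mod_cast (by omega : (0:ℤ) < A - v s)
        rw [div_le_div_iff₀ hpos hupos]
        have hkeyR : ((((s:ℤ) - (r₀:ℤ) : ℤ):ℝ) + 1)^2 ≤ 2*(((A - v s : ℤ):ℝ) - 1) := by
          have h' : ((((((s:ℤ) - (r₀:ℤ)) + 1)^2 : ℤ)):ℝ) ≤ (((2*((A - 1) - v s)):ℤ):ℝ) := by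
            exact_mod_cast hkey
          push_cast at h' ⊢
          linarith
        have huR : ((((s:ℤ) - (r₀:ℤ) : ℤ)):ℝ) ≤ -2 := by
          exact_mod_cast (by omega : (s:ℤ) - (r₀:ℤ) ≤ -2)
        nlinarith
      · -- above: r₀ + 2 ≤ s
        have hst : r₀ < s := by omega
        have hsep' := hsep r₀ s hst
        have hkey : ((s:ℤ) - (r₀:ℤ))^2 ≤ 2*(v s - A) := by omega
        have hu2 : (2:ℤ) ≤ (s:ℤ) - (r₀:ℤ) := by omega
        have hu4 : (4:ℤ) ≤ ((s:ℤ) - (r₀:ℤ))^2 := by nlinarith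
        have hne : v s - A ≠ 0 := by omega
        refine le_trans (wfun_le_div _ hne) ?_
        have habs : |((v s - A : ℤ) : ℝ)| = ((v s - A : ℤ) : ℝ) := by
          rw [← Int.cast_abs]; congr 1
          exact abs_of_pos (by omega : 0 < v s - A)
        rw [habs]
        have hpos : (0:ℝ) < ((v s - A : ℤ) : ℝ) := by
          exact_mod_cast (by omega : (0:ℤ) < v s - A)
        rw [div_le_div_iff₀ hpos hupos]
        have hkeyR : ((((s:ℤ) - (r₀:ℤ) : ℤ)):ℝ)^2 ≤ 2*((v s - A : ℤ):ℝ) := by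
          exact_mod_cast hkey
        nlinarith
  have hF1 : Summable (fun s : ℕ => if s ∈ S then T else 0) :=
    summable_of_ne_finset_zero (s := S) (fun b hb => by simp [hb])
  have hinj : Function.Injective (fun s : ℕ => (s:ℤ) - (r₀:ℤ)) := by
    intro a b hab; simpa using hab
  have hF2 : Summable (fun s : ℕ => (16:ℝ) / (((s:ℤ) - (r₀:ℤ) : ℤ) : ℝ)^2) := by
    have := sixteen_summable.comp_injective hinj
    simpa [Function.comp_def] using this
  have hFsum : Summable F := by
    rw [hF]; exact hF1.add hF2
  have hsum : Summable (fun s : ℕ => wfun T (v s - A)) :=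
    Summable.of_nonneg_of_le (fun s => wfun_nonneg hT _) hbound hFsum
  refine ⟨hsum, ?_⟩
  have h1 : ∑' s : ℕ, wfun T (v s - A) ≤ ∑' s, F s := Summable.tsum_le_tsum hbound hsum hFsum
  have h2 : ∑' s, F s = (∑' s : ℕ, if s ∈ S then T else 0)
      + ∑' s : ℕ, (16:ℝ) / (((s:ℤ) - (r₀:ℤ) : ℤ) : ℝ)^2 := by
    rw [hF]; exact Summable.tsum_add hF1 hF2
  have hcard : S.card ≤ 3 := by
    rw [hS]
    refine (Finset.card_insert_le _ _).trans (Nat.succ_le_succ ?_)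
    refine (Finset.card_insert_le _ _).trans (Nat.succ_le_succ ?_)
    simp
  have h3 : (∑' s : ℕ, if s ∈ S then T else 0) ≤ 3*T := by
    rw [tsum_eq_sum (s := S) (fun b hb => by simp [hb])]
    calc ∑ s ∈ S, (if s ∈ S then T else 0) = ∑ s ∈ S, T := by
          apply Finset.sum_congr rfl; intro s hs; simp [hs]
    _ = S.card * T := by rw [Finset.sum_const]; simp [nsmul_eq_mul]
    _ ≤ 3 * T := by
        have : (S.card : ℝ) ≤ 3 := by exact_mod_cast hcard
        nlinarith
  have h4 : ∑' s : ℕ, (16:ℝ) / (((s:ℤ) - (r₀:ℤ) : ℤ) : ℝ)^2 ≤ 16 * Sig := by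
    rw [← sixteen_tsum]
    exact Summable.tsum_le_tsum_of_inj _ hinj (fun c _ => by positivity) (fun s => le_rfl)
      hF2 sixteen_summable
  linarith

open Polynomial in
lemma key_lemma (P : Polynomial ℤ) (hP : P.Monic) (d : ℕ) (hd : 2 ≤ d)
    (hdeg : P.natDegree = d) {T : ℝ} (hT : 0 < T) :
    ∃ K : ℝ, 0 < K ∧ ∀ A : ℤ,
      Summable (fun m : ℤ => wfun T (P.eval m - A)) ∧
      ∑' m : ℤ, wfun T (P.eval m - A) ≤ K := by
  classical
  obtain ⟨M₁, hM₁, hgap₁⟩ := gap_lemma P hP d hd hdeg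
  -- the reflected polynomial
  set Q : Polynomial ℤ := Polynomial.C ((-1:ℤ)^d) * (P.comp (-Polynomial.X)) with hQ
  have hQeval : ∀ m : ℤ, Q.eval m = (-1:ℤ)^d * P.eval (-m) := by
    intro m; simp [hQ, Polynomial.eval_comp]
  have hcompdeg : (P.comp (-Polynomial.X)).natDegree = d := by
    rw [Polynomial.natDegree_comp, hdeg]
    simp
  have hQdeg : Q.natDegree = d := by
    rw [hQ, Polynomial.natDegree_C_mul (pow_ne_zero d (by norm_num)), hcompdeg]
  have hQmonic : Q.Monic := by
    have hlc : Q.leadingCoeff = 1 := by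
      rw [hQ, Polynomial.leadingCoeff_mul, Polynomial.leadingCoeff_C,
        Polynomial.leadingCoeff_comp (by simp : (-Polynomial.X : Polynomial ℤ).natDegree ≠ 0)]
      rw [hP.leadingCoeff, Polynomial.leadingCoeff_neg, Polynomial.leadingCoeff_X, hdeg]
      rw [one_mul, ← pow_add]
      exact Even.neg_one_pow ⟨d, rfl⟩
    exact hlc
  obtain ⟨M₂, hM₂, hgap₂⟩ := gap_lemma Q hQmonic d hd hQdeg
  set ε : ℤ := (-1:ℤ)^d with hε
  have hwfun_eps : ∀ a b : ℤ, wfun T (ε*a - ε*b) = wfun T (a - b) := by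
    intro a b
    rcases neg_one_pow_eq_or ℤ d with h | h
    · rw [← hε] at h; rw [h]; ring_nf
    · rw [← hε] at h; rw [h]
      have : (-1)*a - (-1)*b = -(a - b) := by ring
      rw [this, wfun_neg]
  -- the two tails
  set v₁ : ℕ → ℤ := fun s => P.eval ((s:ℤ) + M₁) with hv₁
  set v₂ : ℕ → ℤ := fun s => Q.eval ((s:ℤ) + M₂) with hv₂
  have hstep₁ : ∀ s : ℕ, (s:ℤ) + 1 ≤ v₁ (s+1) - v₁ s := by
    intro s
    have h := hgap₁ (s + M₁) (by omega)
    have e1 : ((s + M₁ : ℕ):ℤ) = (s:ℤ) + M₁ := by push_cast; ring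
    rw [e1] at h
    have e2 : ((s+1:ℕ):ℤ) + (M₁:ℤ) = (s:ℤ) + M₁ + 1 := by push_cast; ring
    have hM₁' : (1:ℤ) ≤ (M₁:ℤ) := by exact_mod_cast hM₁
    simp only [hv₁, e2]
    omega
  have hstep₂ : ∀ s : ℕ, (s:ℤ) + 1 ≤ v₂ (s+1) - v₂ s := by
    intro s
    have h := hgap₂ (s + M₂) (by omega)
    have e1 : ((s + M₂ : ℕ):ℤ) = (s:ℤ) + M₂ := by push_cast; ring
    rw [e1] at h
    have e2 : ((s+1:ℕ):ℤ) + (M₂:ℤ) = (s:ℤ) + M₂ + 1 := by push_cast; ring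
    have hM₂' : (1:ℤ) ≤ (M₂:ℤ) := by exact_mod_cast hM₂
    simp only [hv₂, e2]
    omega
  have hsep₁ := sep_of_step v₁ hstep₁
  have hsep₂ := sep_of_step v₂ hstep₂
  refine ⟨2*(3*T + 16*Sig) + (M₁ + M₂ + 1)*T, by
    have h1 := sig_nonneg
    have h2 : (0:ℝ) ≤ (M₁:ℝ) := Nat.cast_nonneg _
    have h3 : (0:ℝ) ≤ (M₂:ℝ) := Nat.cast_nonneg _
    nlinarith, fun A => ?_⟩
  set ψ : ℤ → ℝ := fun m => wfun T (P.eval m - A) with hψ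
  have hψ_nonneg : ∀ m, 0 ≤ ψ m := fun m => wfun_nonneg hT _
  have hψpos : ∀ n : ℕ, ψ ((n:ℤ) + M₁) = wfun T (v₁ n - A) := fun n => rfl
  have hψneg : ∀ n : ℕ, ψ (-(n:ℤ) - M₂) = wfun T (v₂ n - ε*A) := by
    intro n
    have : v₂ n = ε * P.eval (-(n:ℤ) - M₂) := by
      rw [hv₂]
      simp only []
      rw [hQeval]
      congr 2
      ring
    rw [hψ]
    simp only []
    rw [this, ← hwfun_eps (P.eval (-(n:ℤ) - M₂)) A]
  have hsum₁ := tail_lemma hT v₁ hsep₁ A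
  have hsum₂ := tail_lemma hT v₂ hsep₂ (ε*A)
  -- summability of ψ over ℤ
  have hψsummable : Summable ψ := by
    rw [summable_int_iff_summable_nat_and_neg]
    constructor
    · rw [← summable_nat_add_iff M₁]
      have : (fun n : ℕ => ψ ((n + M₁ : ℕ):ℤ)) = fun n : ℕ => wfun T (v₁ n - A) := by
        funext n
        have : ((n + M₁ : ℕ):ℤ) = (n:ℤ) + M₁ := by push_cast; ring
        rw [this, hψpos]
      exact this ▸ hsum₁.1
    · rw [← summable_nat_add_iff M₂]
      have : (fun n : ℕ => ψ (-((n + M₂ : ℕ):ℤ))) = fun n : ℕ => wfun T (v₂ n - ε*A) := by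
        funext n
        have e : -((n + M₂ : ℕ):ℤ) = -(n:ℤ) - M₂ := by push_cast; ring
        rw [e, hψneg]
      exact this ▸ hsum₂.1
  refine ⟨hψsummable, ?_⟩
  refine Summable.tsum_le_of_sum_le hψsummable (fun u => ?_)
  set u₁ := u.filter (fun m => (M₁:ℤ) ≤ m) with hu₁
  set u₂ := u.filter (fun m => m ≤ -(M₂:ℤ)) with hu₂
  set u₃ := u.filter (fun m => -(M₂:ℤ) < m ∧ m < (M₁:ℤ)) with hu₃
  have hsubset : u ⊆ (u₁ ∪ u₂) ∪ u₃ := by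
    intro m hm
    simp only [hu₁, hu₂, hu₃, Finset.mem_union, Finset.mem_filter]
    have hM₁' : (1:ℤ) ≤ (M₁:ℤ) := by exact_mod_cast hM₁
    by_cases h1 : (M₁:ℤ) ≤ m
    · exact Or.inl (Or.inl ⟨hm, h1⟩)
    by_cases h2 : m ≤ -(M₂:ℤ)
    · exact Or.inl (Or.inr ⟨hm, h2⟩)
    · exact Or.inr ⟨hm, by omega, by omega⟩
  have hd12 : Disjoint u₁ u₂ := by
    rw [Finset.disjoint_left]
    intro m hm1 hm2
    simp only [hu₁, hu₂, Finset.mem_filter] at hm1 hm2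
    have hM₁' : (1:ℤ) ≤ (M₁:ℤ) := by exact_mod_cast hM₁
    have hM₂' : (1:ℤ) ≤ (M₂:ℤ) := by exact_mod_cast hM₂
    omega
  have hd123 : Disjoint (u₁ ∪ u₂) u₃ := by
    rw [Finset.disjoint_left]
    intro m hm1 hm3
    simp only [hu₁, hu₂, hu₃, Finset.mem_union, Finset.mem_filter] at hm1 hm3
    rcases hm1 with h | h <;> omega
  calc ∑ m ∈ u, ψ m ≤ ∑ m ∈ (u₁ ∪ u₂) ∪ u₃, ψ m :=
        Finset.sum_le_sum_of_subset_of_nonneg hsubset (fun m _ _ => hψ_nonneg m)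
  _ = (∑ m ∈ u₁, ψ m + ∑ m ∈ u₂, ψ m) + ∑ m ∈ u₃, ψ m := by
        rw [Finset.sum_union hd123, Finset.sum_union hd12]
  _ ≤ ((3*T + 16*Sig) + (3*T + 16*Sig)) + (M₁ + M₂ + 1)*T := by
        gcongr
        · -- u₁
          have hrange : ∀ m ∈ u₁, m ∉ Set.range (fun n : ℕ => (n:ℤ) + M₁) → ψ m = 0 := by
            intro m hm hr
            exfalso
            apply hr
            simp only [hu₁, Finset.mem_filter] at hm
            exact ⟨(m - M₁).toNat, by show ((m - (M₁:ℤ)).toNat : ℤ) + M₁ = m; omega⟩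
          have hinj : Set.InjOn (fun n : ℕ => (n:ℤ) + M₁)
              ((fun n : ℕ => (n:ℤ) + M₁) ⁻¹' u₁) := fun a _ b _ hab => by
            simp only at hab; omega
          rw [← Finset.sum_preimage (fun n : ℕ => (n:ℤ) + M₁) u₁ hinj ψ hrange]
          have : ∀ n ∈ u₁.preimage (fun n : ℕ => (n:ℤ) + M₁) hinj,
              ψ ((n:ℤ) + M₁) = wfun T (v₁ n - A) := fun n _ => hψpos n
          rw [Finset.sum_congr rfl this]
          exact le_trans (Summable.sum_le_tsum _ (fun n _ => wfun_nonneg hT _) hsum₁.1) hsum₁.2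
        · -- u₂
          have hrange : ∀ m ∈ u₂, m ∉ Set.range (fun n : ℕ => -(n:ℤ) - M₂) → ψ m = 0 := by
            intro m hm hr
            exfalso
            apply hr
            simp only [hu₂, Finset.mem_filter] at hm
            exact ⟨(-m - M₂).toNat, by show -(((-m - (M₂:ℤ)).toNat : ℤ)) - M₂ = m; omega⟩
          have hinj : Set.InjOn (fun n : ℕ => -(n:ℤ) - M₂)
              ((fun n : ℕ => -(n:ℤ) - M₂) ⁻¹' u₂) := fun a _ b _ hab => by
            simp only at hab; omega
          rw [← Finset.sum_preimage (fun n : ℕ => -(n:ℤ) - M₂) u₂ hinj ψ hrange]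
          have : ∀ n ∈ u₂.preimage (fun n : ℕ => -(n:ℤ) - M₂) hinj,
              ψ (-(n:ℤ) - M₂) = wfun T (v₂ n - ε*A) := fun n _ => hψneg n
          rw [Finset.sum_congr rfl this]
          exact le_trans (Summable.sum_le_tsum _ (fun n _ => wfun_nonneg hT _) hsum₂.1) hsum₂.2
        · -- u₃
          have hsub3 : u₃ ⊆ Finset.Ioo (-(M₂:ℤ)) (M₁:ℤ) := by
            intro m hm
            simp only [hu₃, Finset.mem_filter] at hm
            exact Finset.mem_Ioo.mpr ⟨hm.2.1, hm.2.2⟩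
          have hcard : (u₃.card : ℝ) ≤ (M₁:ℝ) + M₂ + 1 := by
            have h1 : u₃.card ≤ (Finset.Ioo (-(M₂:ℤ)) (M₁:ℤ)).card :=
              Finset.card_le_card hsub3
            have h2 : (Finset.Ioo (-(M₂:ℤ)) (M₁:ℤ)).card = ((M₁:ℤ) - (-(M₂:ℤ)) - 1).toNat := by
              rw [Int.card_Ioo]
            have h3 : u₃.card ≤ M₁ + M₂ + 1 := by
              rw [h2] at h1
              omega
            exact_mod_cast h3
          calc ∑ m ∈ u₃, ψ m ≤ ∑ m ∈ u₃, T :=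
                Finset.sum_le_sum (fun m _ => wfun_le_T hT _)
          _ = u₃.card * T := by rw [Finset.sum_const]; simp [nsmul_eq_mul]
          _ ≤ ((M₁:ℝ) + M₂ + 1) * T := by nlinarith
  _ = 2*(3*T + 16*Sig) + (M₁ + M₂ + 1)*T := by ring

lemma norm_exp_I_mul_ofReal (r : ℝ) : ‖Complex.exp (Complex.I * r)‖ = 1 := by
  simp [Complex.norm_exp]

lemma exp_integral_bound {T : ℝ} (hT : 0 < T) (Δ : ℤ) :
    ‖∫ t in Set.Ioc (0:ℝ) T, Complex.exp (Complex.I * (Δ:ℂ) * t)‖ ≤ wfun T Δ := by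
  have hmeas : (volume (Set.Ioc (0:ℝ) T)).toReal = T := by
    simp [Real.volume_Ioc, ENNReal.toReal_ofReal hT.le]
  have hnorm1 : ∀ t : ℝ, ‖Complex.exp (Complex.I * (Δ:ℂ) * t)‖ = 1 := by
    intro t
    have e : Complex.I * (Δ:ℂ) * t = Complex.I * (((Δ:ℝ) * t : ℝ) : ℂ) := by
      push_cast; ring
    rw [e, norm_exp_I_mul_ofReal]
  have hleT : ‖∫ t in Set.Ioc (0:ℝ) T, Complex.exp (Complex.I * (Δ:ℂ) * t)‖ ≤ T := by
    calc ‖∫ t in Set.Ioc (0:ℝ) T, Complex.exp (Complex.I * (Δ:ℂ) * t)‖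
        ≤ ∫ t in Set.Ioc (0:ℝ) T, ‖Complex.exp (Complex.I * (Δ:ℂ) * t)‖ :=
          norm_integral_le_integral_norm _
    _ = ∫ _t in Set.Ioc (0:ℝ) T, (1:ℝ) := by
          apply setIntegral_congr_fun measurableSet_Ioc
          intro t _
          exact hnorm1 t
    _ = T := by rw [setIntegral_const, smul_eq_mul, mul_one, measureReal_def, hmeas]
  by_cases hΔ : Δ = 0
  · unfold wfun
    rw [if_pos hΔ]
    exact hleT
  · have hwf : wfun T Δ = min T (2 / |(Δ:ℝ)|) := by rw [wfun, if_neg hΔ]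
    rw [hwf]
    refine le_min hleT ?_
    have hc : (Complex.I * (Δ:ℂ)) ≠ 0 := by
      simp [Complex.ext_iff]
      exact_mod_cast hΔ
    have hΔR : |(Δ:ℝ)| ≠ 0 := by
      simp only [ne_eq, abs_eq_zero, Int.cast_eq_zero]
      exact hΔ
    have hFTC : ∫ t in Set.Ioc (0:ℝ) T, Complex.exp (Complex.I * (Δ:ℂ) * t)
        = (Complex.exp (Complex.I * (Δ:ℂ) * T) - Complex.exp (Complex.I * (Δ:ℂ) * 0))
          / (Complex.I * (Δ:ℂ)) := by
      rw [← intervalIntegral.integral_of_le hT.le]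
      exact integral_exp_mul_complex hc
    rw [hFTC]
    rw [norm_div]
    have h1 : ‖Complex.exp (Complex.I * (Δ:ℂ) * T)‖ = 1 := hnorm1 T
    have h0 : ‖Complex.exp (Complex.I * (Δ:ℂ) * 0)‖ = 1 := hnorm1 0
    have hden : ‖Complex.I * (Δ:ℂ)‖ = |(Δ:ℝ)| := by
      rw [norm_mul, Complex.norm_I, one_mul]
      exact_mod_cast Complex.norm_intCast Δ
    rw [hden]
    have hnum : ‖Complex.exp (Complex.I * (Δ:ℂ) * T) - Complex.exp (Complex.I * (Δ:ℂ) * 0)‖ ≤ 2 := by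
      calc _ ≤ ‖Complex.exp (Complex.I * (Δ:ℂ) * T)‖ + ‖Complex.exp (Complex.I * (Δ:ℂ) * 0)‖ :=
            norm_sub_le _ _
      _ = 2 := by rw [h1, h0]; norm_num
    have habs : (0:ℝ) < |(Δ:ℝ)| := lt_of_le_of_ne (abs_nonneg _) (Ne.symm hΔR)
    gcongr


lemma norm_exp_aux (k j : ℤ) (x t : ℝ) :
    ‖Complex.exp (Complex.I * ((k:ℂ)*(x:ℂ) + (j:ℂ)*(t:ℂ)))‖ = 1 := by
  have e : Complex.I * ((k:ℂ)*(x:ℂ) + (j:ℂ)*(t:ℂ))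
      = Complex.I * ((((k:ℝ)*x + (j:ℝ)*t : ℝ)):ℂ) := by push_cast; ring
  rw [e, norm_exp_I_mul_ofReal]

/-- `L^∞_x L²_t` Strichartz estimate for `e^{itP(D)}` on the torus: for the solution
`u(t,x) = ∑_k c_k e^{i(kx + P(k)t)}`, one has
`sup_x (∫₀^T |u(t,x)|² dt)^{1/2} ≤ C (∑_k |c_k|²)^{1/2}`. -/
theorem stmt3 (d : ℕ) (hd : 2 ≤ d) (P : Polynomial ℤ) (hP : P.Monic)
    (hdeg : P.natDegree = d) (T : ℝ) (hT : 0 < T) :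
    ∃ C : ℝ, 0 < C ∧ ∀ c : ℤ → ℂ, Summable (fun k => ‖c k‖ ^ 2) → ∀ x : ℝ,
      Real.sqrt (∫ t in Set.Ioc (0:ℝ) T,
          ‖∑' k : ℤ, c k *
            Complex.exp (Complex.I * ((k : ℂ) * (x : ℂ) + ((P.eval k : ℤ) : ℂ) * (t : ℂ)))‖ ^ 2)
        ≤ C * Real.sqrt (∑' k : ℤ, ‖c k‖ ^ 2) := by
  obtain ⟨K, hK, hkey⟩ := key_lemma P hP d hd hdeg hT
  refine ⟨Real.sqrt K, Real.sqrt_pos.mpr hK, fun c hc2 x => ?_⟩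
  by_cases hc1 : Summable (fun k : ℤ => ‖c k‖)
  swap
  · -- not ℓ¹ : tsum is zero everywhere
    have hzero : ∀ t : ℝ, (∑' k : ℤ, c k *
        Complex.exp (Complex.I * ((k : ℂ) * (x : ℂ) + ((P.eval k : ℤ) : ℂ) * (t : ℂ)))) = 0 := by
      intro t
      apply tsum_eq_zero_of_not_summable
      intro hs
      apply hc1
      have h := summable_norm_iff.mpr hs
      have heq : (fun k : ℤ => ‖c k *
          Complex.exp (Complex.I * ((k : ℂ) * (x : ℂ) + ((P.eval k : ℤ) : ℂ) * (t : ℂ)))‖)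
          = fun k : ℤ => ‖c k‖ := by
        funext k
        rw [norm_mul, norm_exp_aux k (P.eval k) x t, mul_one]
      rwa [heq] at h
    have hint : (∫ t in Set.Ioc (0:ℝ) T,
        ‖∑' k : ℤ, c k *
          Complex.exp (Complex.I * ((k : ℂ) * (x : ℂ) + ((P.eval k : ℤ) : ℂ) * (t : ℂ)))‖ ^ 2)
        = 0 := by
      have hcong : ∀ t ∈ Set.Ioc (0:ℝ) T, (fun t : ℝ => ‖∑' k : ℤ, c k *
          Complex.exp (Complex.I * ((k : ℂ) * (x : ℂ) + ((P.eval k : ℤ) : ℂ) * (t : ℂ)))‖ ^ 2) t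
          = (fun _ : ℝ => (0:ℝ)) t := by
        intro t _
        simp only [hzero t, norm_zero]
        norm_num
      rw [MeasureTheory.setIntegral_congr_fun measurableSet_Ioc hcong]
      simp
    rw [hint, Real.sqrt_zero]
    positivity
  · -- main case
    set a : ℤ → ℝ := fun k => ‖c k‖ with ha
    set e : ℤ → ℝ → ℂ := fun k t => Complex.exp (Complex.I *
        ((k : ℂ) * (x : ℂ) + ((P.eval k : ℤ) : ℂ) * (t : ℂ))) with he
    set g : ℝ → ℂ := fun t => ∑' k : ℤ, c k * e k t with hg
    have he_norm : ∀ (k : ℤ) (t : ℝ), ‖e k t‖ = 1 := fun k t => norm_exp_aux k (P.eval k) x t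
    have hce_norm : ∀ (t : ℝ) (k : ℤ), ‖c k * e k t‖ = a k := by
      intro t k; rw [norm_mul, he_norm, mul_one]
    have he_cont : ∀ k : ℤ, Continuous (e k) := by
      intro k
      exact Complex.continuous_exp.comp
        (continuous_const.mul (continuous_const.add
          (continuous_const.mul Complex.continuous_ofReal)))
    have hg_cont : Continuous g := by
      rw [hg]
      exact continuous_tsum (fun k => continuous_const.mul (he_cont k)) hc1
        (fun k t => le_of_eq (hce_norm t k))
    set F : ℤ × ℤ → ℝ → ℂ := fun p t =>
      (c p.1 * e p.1 t) * (starRingEnd ℂ) (c p.2 * e p.2 t) with hF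
    have hmeasT : (MeasureTheory.volume (Set.Ioc (0:ℝ) T)).toReal = T := by
      simp [Real.volume_Ioc, ENNReal.toReal_ofReal hT.le]
    have hgg : ∀ t : ℝ, ‖g t‖^2 = (g t * (starRingEnd ℂ) (g t)).re := by
      intro t
      rw [Complex.mul_conj]
      simp [Complex.normSq_eq_norm_sq, ← Complex.ofReal_pow]
    have hexpand : ∀ t : ℝ, g t * (starRingEnd ℂ) (g t) = ∑' p : ℤ × ℤ, F p t := by
      intro t
      have hsf : Summable (fun k : ℤ => ‖c k * e k t‖) := by
        have hfe : (fun k : ℤ => ‖c k * e k t‖) = a := funext (hce_norm t)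
        rw [hfe]; exact hc1
      have hsg : Summable (fun k : ℤ => ‖(starRingEnd ℂ) (c k * e k t)‖) := by
        have hfe : (fun k : ℤ => ‖(starRingEnd ℂ) (c k * e k t)‖) = a := by
          funext k; rw [RCLike.norm_conj, hce_norm]
        rw [hfe]; exact hc1
      have hconj : (starRingEnd ℂ) (g t) = ∑' k : ℤ, (starRingEnd ℂ) (c k * e k t) := by
        rw [hg]
        simpa [RCLike.star_def] using (tsum_star (f := fun k : ℤ => c k * e k t))
      rw [hg, hconj]
      exact tsum_mul_tsum_of_summable_norm hsf hsg
    have hFcont : ∀ p : ℤ × ℤ, Continuous (F p) := by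
      intro p
      exact (continuous_const.mul (he_cont p.1)).mul
        (Complex.continuous_conj.comp (continuous_const.mul (he_cont p.2)))
    have hFint : ∀ p : ℤ × ℤ, MeasureTheory.Integrable (F p)
        (MeasureTheory.volume.restrict (Set.Ioc (0:ℝ) T)) :=
      fun p => (hFcont p).integrableOn_Ioc
    have hFnorm : ∀ (p : ℤ × ℤ) (t : ℝ), ‖F p t‖ = a p.1 * a p.2 := by
      intro p t
      rw [hF]
      simp only []
      rw [norm_mul, RCLike.norm_conj, hce_norm, hce_norm]
    have hFintnorm : ∀ p : ℤ × ℤ,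
        (∫ t in Set.Ioc (0:ℝ) T, ‖F p t‖) = a p.1 * a p.2 * T := by
      intro p
      rw [MeasureTheory.setIntegral_congr_fun measurableSet_Ioc (fun t _ => hFnorm p t)]
      rw [MeasureTheory.setIntegral_const, smul_eq_mul, measureReal_def, hmeasT]
      ring
    have haa : Summable (fun p : ℤ × ℤ => a p.1 * a p.2) :=
      hc1.mul_of_nonneg hc1 (fun k => norm_nonneg _) (fun k => norm_nonneg _)
    have hsummable_pairnorm :
        Summable (fun p : ℤ × ℤ => ∫ t in Set.Ioc (0:ℝ) T, ‖F p t‖) := by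
      have hfe : (fun p : ℤ × ℤ => ∫ t in Set.Ioc (0:ℝ) T, ‖F p t‖)
          = fun p : ℤ × ℤ => a p.1 * a p.2 * T := funext hFintnorm
      rw [hfe]
      exact haa.mul_right T
    have hswap := MeasureTheory.integral_tsum_of_summable_integral_norm hFint hsummable_pairnorm
    set W : ℤ × ℤ → ℝ := fun p => wfun T (P.eval p.1 - P.eval p.2) with hW
    have hW_nonneg : ∀ p, 0 ≤ W p := fun p => wfun_nonneg hT _
    have hW_symm : ∀ k m : ℤ, W (m, k) = W (k, m) := by
      intro k m
      rw [hW]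
      simp only []
      rw [show P.eval m - P.eval k = -(P.eval k - P.eval m) by ring, wfun_neg]
    have hI : ∀ p : ℤ × ℤ, ‖∫ t in Set.Ioc (0:ℝ) T, F p t‖ ≤ a p.1 * a p.2 * W p := by
      rintro ⟨k, m⟩
      set Δ : ℤ := P.eval k - P.eval m with hΔ
      set Cp : ℂ := c k * (starRingEnd ℂ) (c m) *
        Complex.exp (Complex.I * (((k:ℂ) - (m:ℂ)) * (x:ℂ))) with hCp
      have heq : ∀ t : ℝ, F (k, m) t = Cp * Complex.exp (Complex.I * (Δ:ℂ) * (t:ℂ)) := by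
        intro t
        have hconjz : (starRingEnd ℂ) (Complex.I *
            ((m:ℂ) * (x:ℂ) + ((P.eval m : ℤ):ℂ) * (t:ℂ)))
            = -Complex.I * ((m:ℂ) * (x:ℂ) + ((P.eval m : ℤ):ℂ) * (t:ℂ)) := by
          simp [map_mul, map_add, Complex.conj_I, Complex.conj_ofReal]
        have hcalc : F (k, m) t = (c k * (starRingEnd ℂ) (c m)) *
            (Complex.exp (Complex.I * ((k:ℂ) * (x:ℂ) + ((P.eval k : ℤ):ℂ) * (t:ℂ))
              + (starRingEnd ℂ) (Complex.I * ((m:ℂ) * (x:ℂ) + ((P.eval m : ℤ):ℂ) * (t:ℂ))))) := by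
          rw [hF, he]
          simp only []
          rw [map_mul, ← Complex.exp_conj, Complex.exp_add]
          ring
        rw [hcalc, hconjz, hCp]
        rw [mul_assoc (c k * (starRingEnd ℂ) (c m)), ← Complex.exp_add]
        congr 2
        push_cast [hΔ]
        ring
      have hint_eq : (∫ t in Set.Ioc (0:ℝ) T, F (k, m) t)
          = Cp * ∫ t in Set.Ioc (0:ℝ) T, Complex.exp (Complex.I * (Δ:ℂ) * (t:ℂ)) := by
        rw [MeasureTheory.setIntegral_congr_fun measurableSet_Ioc (fun t _ => heq t)]
        exact MeasureTheory.integral_const_mul Cp _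
      have hCpnorm : ‖Cp‖ = a k * a m := by
        rw [hCp, norm_mul, norm_mul, RCLike.norm_conj]
        have e2 : Complex.I * (((k:ℂ) - (m:ℂ)) * (x:ℂ))
            = Complex.I * (((((k - m : ℤ):ℝ)) * x : ℝ) : ℂ) := by push_cast; ring
        rw [e2, norm_exp_I_mul_ofReal, mul_one]
      rw [hint_eq, norm_mul, hCpnorm]
      have hexpb := exp_integral_bound hT Δ
      have hWkm : W (k, m) = wfun T Δ := by rw [hW]
      rw [hWkm]
      show ‖c k‖ * ‖c m‖ * ‖∫ t in Set.Ioc (0:ℝ) T, Complex.exp (Complex.I * (Δ:ℂ) * (t:ℂ))‖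
        ≤ ‖c k‖ * ‖c m‖ * wfun T Δ
      exact mul_le_mul_of_nonneg_left hexpb
        (mul_nonneg (norm_nonneg (c k)) (norm_nonneg (c m)))
    -- Schur test
    have hkey' : ∀ k : ℤ, Summable (fun m : ℤ => W (k, m)) ∧ ∑' m : ℤ, W (k, m) ≤ K := by
      intro k
      have h := hkey (P.eval k)
      have heq : (fun m : ℤ => W (k, m)) = fun m : ℤ => wfun T (P.eval m - P.eval k) := by
        funext m
        rw [← hW_symm]
      rw [heq]
      exact h
    set u1 : ℤ × ℤ → ℝ := fun p => a p.1 ^ 2 * W p with hu1def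
    have hu1_inner : ∀ k : ℤ, Summable (fun m : ℤ => u1 (k, m)) := by
      intro k
      exact ((hkey' k).1.mul_left (a k ^ 2))
    have hu1_inner_bound : ∀ k : ℤ, ∑' m : ℤ, u1 (k, m) ≤ a k ^ 2 * K := by
      intro k
      rw [hu1def]
      simp only []
      rw [tsum_mul_left]
      exact mul_le_mul_of_nonneg_left (hkey' k).2 (sq_nonneg (a k))
    have hu1_nonneg : ∀ p, 0 ≤ u1 p := fun p => mul_nonneg (sq_nonneg _) (hW_nonneg p)
    have hSa : Summable (fun k : ℤ => a k ^ 2) := hc2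
    have hu1 : Summable u1 := by
      rw [summable_prod_of_nonneg hu1_nonneg]
      refine ⟨hu1_inner, ?_⟩
      refine Summable.of_nonneg_of_le (fun k => tsum_nonneg (fun m => hu1_nonneg (k, m)))
        (fun k => hu1_inner_bound k) (hSa.mul_right K)
    have hu1_tsum : ∑' p : ℤ × ℤ, u1 p ≤ K * ∑' k : ℤ, a k ^ 2 := by
      rw [Summable.tsum_prod' hu1 hu1_inner]
      calc ∑' k : ℤ, ∑' m : ℤ, u1 (k, m) ≤ ∑' k : ℤ, a k ^ 2 * K := by
            refine Summable.tsum_le_tsum hu1_inner_bound ?_ (hSa.mul_right K)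
            exact ((summable_prod_of_nonneg hu1_nonneg).mp hu1).2
      _ = K * ∑' k : ℤ, a k ^ 2 := by
            rw [tsum_mul_right, mul_comm]
    set u2 : ℤ × ℤ → ℝ := fun p => a p.2 ^ 2 * W p with hu2def
    have hu21 : ∀ p : ℤ × ℤ, u2 p = u1 (Prod.swap p) := by
      rintro ⟨k, m⟩
      rw [hu1def, hu2def]
      simp only [Prod.swap_prod_mk]
      rw [hW_symm]
    have hu2 : Summable u2 := by
      have hcomp : u2 = u1 ∘ (Equiv.prodComm ℤ ℤ) := funext hu21
      rw [hcomp]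
      exact ((Equiv.prodComm ℤ ℤ).summable_iff).mpr hu1
    have hu2_tsum : ∑' p : ℤ × ℤ, u2 p = ∑' p : ℤ × ℤ, u1 p := by
      have hcomp : u2 = u1 ∘ (Equiv.prodComm ℤ ℤ) := funext hu21
      rw [hcomp]
      exact (Equiv.prodComm ℤ ℤ).tsum_eq u1
    have hpoint : ∀ p : ℤ × ℤ, a p.1 * a p.2 * W p ≤ (u1 p + u2 p) / 2 := by
      intro p
      have h2 := mul_le_mul_of_nonneg_right (two_mul_le_add_sq (a p.1) (a p.2)) (hW_nonneg p)
      rw [hu1def, hu2def]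
      simp only []
      nlinarith [h2]
    have hmaj_sum : Summable (fun p : ℤ × ℤ => a p.1 * a p.2 * W p) := by
      refine Summable.of_nonneg_of_le (fun p => mul_nonneg
        (mul_nonneg (norm_nonneg (c p.1)) (norm_nonneg (c p.2))) (hW_nonneg p)) hpoint ?_
      exact (hu1.add hu2).div_const 2
    have hmaj_tsum : ∑' p : ℤ × ℤ, a p.1 * a p.2 * W p ≤ K * ∑' k : ℤ, a k ^ 2 := by
      calc ∑' p : ℤ × ℤ, a p.1 * a p.2 * W p ≤ ∑' p : ℤ × ℤ, (u1 p + u2 p) / 2 :=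
            Summable.tsum_le_tsum hpoint hmaj_sum ((hu1.add hu2).div_const 2)
      _ = ((∑' p : ℤ × ℤ, u1 p) + ∑' p : ℤ × ℤ, u2 p) / 2 := by
            rw [tsum_div_const, Summable.tsum_add hu1 hu2]
      _ = ∑' p : ℤ × ℤ, u1 p := by rw [hu2_tsum]; ring
      _ ≤ K * ∑' k : ℤ, a k ^ 2 := hu1_tsum
    have hGint : MeasureTheory.Integrable (fun t => g t * (starRingEnd ℂ) (g t))
        (MeasureTheory.volume.restrict (Set.Ioc (0:ℝ) T)) :=
      (hg_cont.mul (Complex.continuous_conj.comp hg_cont)).integrableOn_Ioc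
    have hIsummable : Summable (fun p : ℤ × ℤ => ‖∫ t in Set.Ioc (0:ℝ) T, F p t‖) :=
      Summable.of_nonneg_of_le (fun p => norm_nonneg _) hI hmaj_sum
    have hmain : (∫ t in Set.Ioc (0:ℝ) T, ‖g t‖^2) ≤ K * ∑' k : ℤ, a k ^ 2 := by
      have step1 : (∫ t in Set.Ioc (0:ℝ) T, ‖g t‖^2)
          = (∫ t in Set.Ioc (0:ℝ) T, g t * (starRingEnd ℂ) (g t)).re := by
        rw [MeasureTheory.setIntegral_congr_fun measurableSet_Ioc
          (fun t _ => hgg t)]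
        have hre := integral_re hGint
        simpa [RCLike.re_to_complex] using hre
      have step2 : (∫ t in Set.Ioc (0:ℝ) T, g t * (starRingEnd ℂ) (g t))
          = ∑' p : ℤ × ℤ, ∫ t in Set.Ioc (0:ℝ) T, F p t := by
        rw [MeasureTheory.setIntegral_congr_fun measurableSet_Ioc (fun t _ => hexpand t)]
        exact hswap.symm
      rw [step1, step2]
      calc (∑' p : ℤ × ℤ, ∫ t in Set.Ioc (0:ℝ) T, F p t).re
          ≤ ‖∑' p : ℤ × ℤ, ∫ t in Set.Ioc (0:ℝ) T, F p t‖ := by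
            exact Complex.re_le_norm _
      _ ≤ ∑' p : ℤ × ℤ, ‖∫ t in Set.Ioc (0:ℝ) T, F p t‖ := norm_tsum_le_tsum_norm hIsummable
      _ ≤ ∑' p : ℤ × ℤ, a p.1 * a p.2 * W p := Summable.tsum_le_tsum hI hIsummable hmaj_sum
      _ ≤ K * ∑' k : ℤ, a k ^ 2 := hmaj_tsum
    have hfinal := Real.sqrt_le_sqrt hmain
    rw [Real.sqrt_mul hK.le] at hfinal
    exact hfinal
end

section
/- Let p be a monic integer polynomial of degree d ≥ 2. There is a constant C > 0, depending only on d, such that for every square-summable sequence (a_k)_{k∈ℤ}, ‖∑_{k∈ℤ} a_k e^{i(kx + p(k)t)}‖_{L⁴(𝕋²)} ≤ C (∑_{k∈ℤ} |a_k|²)^{1/2}. -/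
noncomputable section StmtAux

open MeasureTheory Real Polynomial

/-- exponential character on the torus -/
private def ee (m n : ℤ) (x t : ℝ) : ℂ :=
  Complex.exp (Complex.I * ((m : ℂ) * (x : ℂ) + (n : ℂ) * (t : ℂ)))

private def Mf (pq : (ℤ × ℤ) × (ℤ × ℤ)) : ℤ :=
  (pq.1.1 - pq.1.2) - (pq.2.1 - pq.2.2)

private def Nf (P : ℤ[X]) (pq : (ℤ × ℤ) × (ℤ × ℤ)) : ℤ :=
  (P.eval pq.1.1 - P.eval pq.1.2) - (P.eval pq.2.1 - P.eval pq.2.2)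

private def Zc (a : ℤ → ℂ) (pq : (ℤ × ℤ) × (ℤ × ℤ)) : ℂ :=
  (a pq.1.1 * (starRingEnd ℂ) (a pq.1.2)) * (starRingEnd ℂ) (a pq.2.1 * (starRingEnd ℂ) (a pq.2.2))

private def Jc (m : ℤ) : ℂ := if m = 0 then ((2 * π : ℝ) : ℂ) else 0

private def cond2 (P : ℤ[X]) (p q : ℤ × ℤ) : Prop :=
  p.1 ≠ p.2 ∧ q.1 - q.2 = p.1 - p.2 ∧ P.eval q.1 - P.eval q.2 = P.eval p.1 - P.eval p.2

private instance cond2dec (P : ℤ[X]) (p q : ℤ × ℤ) : Decidable (cond2 P p q) := by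
  unfold cond2; infer_instance

private lemma ee_norm (m n : ℤ) (x t : ℝ) : ‖ee m n x t‖ = 1 := by
  rw [ee, Complex.norm_exp]
  have : (Complex.I * ((m : ℂ) * (x : ℂ) + (n : ℂ) * (t : ℂ))).re = 0 := by
    simp [Complex.mul_re, Complex.add_re, Complex.add_im]
  rw [this, Real.exp_zero]

private lemma ee_mul (m n m' n' : ℤ) (x t : ℝ) :
    ee m n x t * ee m' n' x t = ee (m + m') (n + n') x t := by
  rw [ee, ee, ee, ← Complex.exp_add]
  congr 1
  push_cast
  ring

private lemma ee_conj (m n : ℤ) (x t : ℝ) :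
    (starRingEnd ℂ) (ee m n x t) = ee (-m) (-n) x t := by
  rw [ee, ee, ← Complex.exp_conj]
  congr 1
  simp only [map_mul, map_add, Complex.conj_I, map_intCast, Complex.conj_ofReal]
  push_cast
  ring

private lemma ee_split (m n : ℤ) (x t : ℝ) :
    ee m n x t = Complex.exp (Complex.I * (m : ℂ) * (x : ℂ)) *
      Complex.exp (Complex.I * (n : ℂ) * (t : ℂ)) := by
  rw [ee, ← Complex.exp_add]
  congr 1
  ring

private lemma Jval (m : ℤ) :
    (∫ x in Set.Ioc (0:ℝ) (2*π), Complex.exp (Complex.I * (m : ℂ) * (x : ℂ))) = Jc m := by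
  have h2pi : (0:ℝ) ≤ 2*π := by positivity
  rw [← intervalIntegral.integral_of_le h2pi, Jc]
  split
  · rename_i h
    subst h
    simp
  · rename_i h
    have hc : Complex.I * (m:ℂ) ≠ 0 := by
      simp [Complex.I_ne_zero, h]
    rw [show (fun x : ℝ => Complex.exp (Complex.I * m * x)) = fun x : ℝ =>
      Complex.exp ((Complex.I * m) * x) from rfl]
    rw [integral_exp_mul_complex hc]
    have : Complex.exp (Complex.I * m * (2*π:ℝ)) = 1 := by
      rw [show Complex.I * m * ((2*π:ℝ):ℂ) = (m:ℂ) * (2 * π * Complex.I) by push_cast; ring]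
      exact Complex.exp_int_mul_two_pi_mul_I m
    rw [this]
    simp

private lemma Jc_norm_le (m : ℤ) : ‖Jc m‖ ≤ 2 * π := by
  rw [Jc]
  split
  · rw [Complex.norm_real, Real.norm_eq_abs, abs_of_nonneg (by positivity)]
  · simp
    positivity

private lemma polyNe (d : ℕ) (hd : 2 ≤ d) (P : ℤ[X]) (hdeg : P.natDegree = d)
    (m n : ℤ) (hm : m ≠ 0) : P - P.comp (X - C m) - C n ≠ 0 := by
  intro h0
  have heval : ∀ x : ℤ, P.eval x = P.eval (x - m) + n := by
    intro x
    have := congrArg (Polynomial.eval x) h0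
    simp [eval_comp] at this
    linarith
  have hstep : ∀ j : ℕ, P.eval (m * j) = P.eval 0 + n * j := by
    intro j
    induction j with
    | zero => simp
    | succ j ih =>
      have := heval (m * (j + 1))
      push_cast
      push_cast at ih
      have hms : m * ((j:ℤ) + 1) - m = m * j := by ring
      rw [hms] at this
      rw [this, ih]; ring
  set T : ℤ[X] := P.comp (C m * X) - (C n * X + C (P.eval 0)) with hT
  have hT0 : T = 0 := by
    apply eq_zero_of_infinite_isRoot
    apply Set.infinite_of_injective_forall_mem (f := fun j : ℕ => (j : ℤ))
    · exact fun a b hab => Nat.cast_injective hab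
    · intro j
      simp only [Set.mem_setOf_eq, IsRoot, hT, eval_sub, eval_comp, eval_add, eval_mul, eval_C,
        eval_X]
      rw [hstep j]; ring
  have h1 : (P.comp (C m * X)).natDegree = d := by
    rw [natDegree_comp, natDegree_C_mul_X m hm, hdeg, mul_one]
  have h2 : (P.comp (C m * X)) = C n * X + C (P.eval 0) := sub_eq_zero.mp hT0
  rw [h2] at h1
  have : (C n * X + C (P.eval 0) : ℤ[X]).natDegree ≤ 1 := by
    apply natDegree_add_le_of_degree_le
    · exact (natDegree_C_mul_le n X).trans (by simp)
    · simp
  omega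

private lemma countFin (d : ℕ) (hd : 2 ≤ d) (P : ℤ[X]) (hdeg : P.natDegree = d)
    (m n : ℤ) (hm : m ≠ 0) :
    Summable (fun q : ℤ × ℤ =>
        (if (q.1 - q.2 = m ∧ P.eval q.1 - P.eval q.2 = n) then (1:ℝ) else 0)) ∧
    ∑' q : ℤ × ℤ, (if (q.1 - q.2 = m ∧ P.eval q.1 - P.eval q.2 = n) then (1:ℝ) else 0)
      ≤ (d : ℝ) := by
  set R : ℤ[X] := P - P.comp (X - C m) - C n with hRdef
  have hR : R ≠ 0 := polyNe d hd P hdeg m n hm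
  set s : Finset (ℤ × ℤ) := R.roots.toFinset.image (fun r => (r, r - m)) with hs
  have hsupp : ∀ q : ℤ × ℤ, q ∉ s →
      (if (q.1 - q.2 = m ∧ P.eval q.1 - P.eval q.2 = n) then (1:ℝ) else 0) = 0 := by
    intro q hq
    rw [if_neg]
    intro ⟨h1, h2⟩
    apply hq
    have hq2 : q.2 = q.1 - m := by omega
    have hroot : R.IsRoot q.1 := by
      simp only [hRdef, IsRoot, eval_sub, eval_comp, eval_C, eval_X]
      rw [← hq2]; omega
    rw [hs]
    apply Finset.mem_image.mpr
    exact ⟨q.1, Multiset.mem_toFinset.mpr ((mem_roots hR).mpr hroot), by rw [← hq2]⟩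
  refine ⟨summable_of_ne_finset_zero hsupp, ?_⟩
  rw [tsum_eq_sum hsupp]
  have hcard : (s.card : ℝ) ≤ (d : ℝ) := by
    have h1 : s.card ≤ R.roots.toFinset.card := Finset.card_image_le
    have h2 : R.roots.toFinset.card ≤ Multiset.card R.roots := R.roots.toFinset_card_le
    have h3 : Multiset.card R.roots ≤ R.natDegree := R.card_roots'
    have h4 : R.natDegree ≤ d := by
      have c1 : (P.comp (X - C m)).natDegree = d := by
        rw [natDegree_comp, natDegree_X_sub_C, hdeg, mul_one]
      have c2 : (P - P.comp (X - C m)).natDegree ≤ d :=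
        (natDegree_sub_le _ _).trans (by rw [hdeg, c1]; simp)
      exact (natDegree_sub_le _ _).trans
        (by rw [natDegree_C]; exact max_le c2 (Nat.zero_le d))
    exact_mod_cast h1.trans (h2.trans (h3.trans h4))
  calc (∑ q ∈ s, if (q.1 - q.2 = m ∧ P.eval q.1 - P.eval q.2 = n) then (1:ℝ) else 0)
      ≤ ∑ q ∈ s, (1:ℝ) := Finset.sum_le_sum (fun q _ => by split <;> norm_num)
    _ = s.card := by simp
    _ ≤ d := hcard


private lemma keyBound (d : ℕ) (hd : 2 ≤ d) (P : ℤ[X]) (hdeg : P.natDegree = d)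
    (a : ℤ → ℂ) (ha2 : Summable fun k => ‖a k‖ ^ 2) :
    Summable (fun pq : (ℤ × ℤ) × (ℤ × ℤ) =>
      (‖a pq.1.1‖ * ‖a pq.1.2‖) * (‖a pq.2.1‖ * ‖a pq.2.2‖) *
        (if Mf pq = 0 ∧ Nf P pq = 0 then (1:ℝ) else 0)) ∧
    (∑' pq : (ℤ × ℤ) × (ℤ × ℤ),
      (‖a pq.1.1‖ * ‖a pq.1.2‖) * (‖a pq.2.1‖ * ‖a pq.2.2‖) *
        (if Mf pq = 0 ∧ Nf P pq = 0 then (1:ℝ) else 0))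
      ≤ ((d:ℝ) + 1) * (∑' k : ℤ, ‖a k‖ ^ 2) ^ 2 := by
  set A : ℝ := ∑' k : ℤ, ‖a k‖ ^ 2 with hA
  set u : ℤ × ℤ → ℝ := fun p => ‖a p.1‖ * ‖a p.2‖ with hu
  have hunn : ∀ p, 0 ≤ u p := fun p => mul_nonneg (norm_nonneg _) (norm_nonneg _)
  set v : ℤ × ℤ → ℝ := fun p => if p.1 = p.2 then u p else 0 with hv
  have hvnn : ∀ p, 0 ≤ v p := by
    intro p; simp only [hv]; split
    · exact hunn p
    · exact le_refl 0
  set W : (ℤ × ℤ) × (ℤ × ℤ) → ℝ := fun pq =>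
    u pq.1 * u pq.2 * (if Mf pq = 0 ∧ Nf P pq = 0 then (1:ℝ) else 0) with hW
  set W1 : (ℤ × ℤ) × (ℤ × ℤ) → ℝ := fun pq => v pq.1 * v pq.2 with hW1
  set W2a : (ℤ × ℤ) × (ℤ × ℤ) → ℝ := fun pq =>
    u pq.1 ^ 2 * (if cond2 P pq.1 pq.2 then (1:ℝ) else 0) with hW2a
  set W2b : (ℤ × ℤ) × (ℤ × ℤ) → ℝ := fun pq =>
    u pq.2 ^ 2 * (if cond2 P pq.1 pq.2 then (1:ℝ) else 0) with hW2b
  -- diagonal embedding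
  have hdiag : Function.Injective (fun k : ℤ => ((k, k) : ℤ × ℤ)) := by
    intro a b h; exact congrArg Prod.fst h
  have hvsupp0 : ∀ p : ℤ × ℤ, p ∉ Set.range (fun k : ℤ => ((k, k) : ℤ × ℤ)) → v p = 0 := by
    intro p hp
    simp only [hv]
    rw [if_neg]
    intro h
    exact hp ⟨p.1, Prod.ext rfl h⟩
  have hvsupp : Function.support v ⊆ Set.range (fun k : ℤ => ((k, k) : ℤ × ℤ)) := by
    intro p hp
    by_contra hc
    exact hp (hvsupp0 p hc)
  have hvdiag : Summable (fun k : ℤ => v (k, k)) := by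
    apply ha2.congr
    intro k
    simp only [hv, hu, if_pos rfl, sq]
  have hvsum : Summable v := (Function.Injective.summable_iff hdiag hvsupp0).mp hvdiag
  have htv : ∑' p, v p = A := by
    rw [← Function.Injective.tsum_eq hdiag hvsupp]
    have : ∀ k : ℤ, v (k, k) = ‖a k‖ ^ 2 := by
      intro k; simp only [hv, hu, if_pos rfl, sq]
    exact tsum_congr this
  -- W1
  have hW1sum : Summable W1 := hvsum.mul_of_nonneg hvsum hvnn hvnn
  have htW1 : ∑' pq, W1 pq = A ^ 2 := by
    have habs : Summable (fun p => ‖v p‖) := by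
      apply hvsum.congr
      intro p
      rw [Real.norm_eq_abs, abs_of_nonneg (hvnn p)]
    have := tsum_mul_tsum_of_summable_norm habs habs
    rw [hW1, ← this, htv, sq]
  -- u² facts
  have hu2 : Summable (fun p : ℤ × ℤ => u p ^ 2) := by
    have := ha2.mul_of_nonneg ha2 (fun k => sq_nonneg _) (fun k => sq_nonneg _)
    apply this.congr
    intro p
    simp only [hu, mul_pow]
  have htu2 : ∑' p : ℤ × ℤ, u p ^ 2 = A ^ 2 := by
    have habs : Summable (fun k : ℤ => ‖‖a k‖ ^ 2‖) := by
      apply ha2.congr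
      intro k
      rw [Real.norm_eq_abs, abs_of_nonneg (sq_nonneg _)]
    have h := tsum_mul_tsum_of_summable_norm habs habs
    rw [← hA] at h
    rw [show (fun p : ℤ × ℤ => u p ^ 2) = fun p : ℤ × ℤ => ‖a p.1‖ ^ 2 * ‖a p.2‖ ^ 2 by
      funext p; simp only [hu, mul_pow], ← h, sq]
  -- counting
  have hcnt0 : ∀ p : ℤ × ℤ, Summable (fun q => (if cond2 P p q then (1:ℝ) else 0)) ∧
      ∑' q : ℤ × ℤ, (if cond2 P p q then (1:ℝ) else 0) ≤ (d : ℝ) := by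
    intro p
    by_cases hp : p.1 = p.2
    · have hz : (fun q : ℤ × ℤ => (if cond2 P p q then (1:ℝ) else 0)) = fun _ => 0 := by
        funext q; rw [if_neg]; intro hc; exact hc.1 hp
      rw [hz]
      exact ⟨summable_zero, by simp⟩
    · have hm : p.1 - p.2 ≠ 0 := sub_ne_zero_of_ne hp
      have hiff : ∀ q : ℤ × ℤ, cond2 P p q ↔
          (q.1 - q.2 = p.1 - p.2 ∧ P.eval q.1 - P.eval q.2 = P.eval p.1 - P.eval p.2) :=
        fun q => ⟨fun h => h.2, fun h => ⟨hp, h⟩⟩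
      have hre : (fun q : ℤ × ℤ => (if cond2 P p q then (1:ℝ) else 0)) =
          fun q : ℤ × ℤ => (if (q.1 - q.2 = p.1 - p.2 ∧
            P.eval q.1 - P.eval q.2 = P.eval p.1 - P.eval p.2) then (1:ℝ) else 0) := by
        funext q
        by_cases hq : cond2 P p q
        · rw [if_pos hq, if_pos ((hiff q).mp hq)]
        · rw [if_neg hq, if_neg (fun h => hq ((hiff q).mpr h))]
      rw [hre]
      exact countFin d hd P hdeg _ _ hm
  -- slices of W2a
  have hslice : ∀ p : ℤ × ℤ, Summable (fun q : ℤ × ℤ =>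
      u p ^ 2 * (if cond2 P p q then (1:ℝ) else 0)) :=
    fun p => ((hcnt0 p).1).mul_left _
  have hcle : ∀ p : ℤ × ℤ,
      (∑' q : ℤ × ℤ, u p ^ 2 * (if cond2 P p q then (1:ℝ) else 0)) ≤ (d : ℝ) * u p ^ 2 := by
    intro p
    rw [tsum_mul_left]
    rw [mul_comm ((d:ℝ)) (u p ^ 2)]
    exact mul_le_mul_of_nonneg_left (hcnt0 p).2 (sq_nonneg _)
  have hslnn : ∀ p : ℤ × ℤ,
      0 ≤ ∑' q : ℤ × ℤ, u p ^ 2 * (if cond2 P p q then (1:ℝ) else 0) := by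
    intro p
    apply tsum_nonneg
    intro q
    apply mul_nonneg (sq_nonneg _)
    split <;> norm_num
  have hsumsum : Summable (fun p : ℤ × ℤ =>
      ∑' q : ℤ × ℤ, u p ^ 2 * (if cond2 P p q then (1:ℝ) else 0)) :=
    Summable.of_nonneg_of_le hslnn hcle (hu2.mul_left _)
  have hW2ann : ∀ pq, 0 ≤ W2a pq := by
    intro pq
    apply mul_nonneg (sq_nonneg _)
    split <;> norm_num
  have hW2bnn : ∀ pq, 0 ≤ W2b pq := by
    intro pq
    apply mul_nonneg (sq_nonneg _)
    split <;> norm_num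
  have hW2asum : Summable W2a := by
    apply (summable_prod_of_nonneg hW2ann).mpr
    exact ⟨fun p => hslice p, hsumsum⟩
  have htW2a : ∑' pq, W2a pq ≤ (d : ℝ) * A ^ 2 := by
    rw [Summable.tsum_prod' hW2asum (fun p => hslice p)]
    calc (∑' (p : ℤ × ℤ), ∑' (q : ℤ × ℤ), u p ^ 2 * (if cond2 P p q then (1:ℝ) else 0))
        ≤ ∑' (p : ℤ × ℤ), (d : ℝ) * u p ^ 2 :=
          Summable.tsum_le_tsum hcle hsumsum (hu2.mul_left _)
      _ = (d : ℝ) * A ^ 2 := by rw [tsum_mul_left, htu2]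
  -- symmetry
  have hsymm : ∀ p q : ℤ × ℤ, cond2 P p q ↔ cond2 P q p := by
    intro p q
    constructor
    · rintro ⟨h1, h2, h3⟩
      refine ⟨?_, h2.symm, h3.symm⟩
      intro hq
      apply h1
      have : q.1 - q.2 = 0 := by omega
      omega
    · rintro ⟨h1, h2, h3⟩
      refine ⟨?_, h2.symm, h3.symm⟩
      intro hq
      apply h1
      have : p.1 - p.2 = 0 := by omega
      omega
  have hswap : W2b = W2a ∘ (Equiv.prodComm (ℤ × ℤ) (ℤ × ℤ)) := by
    funext pq
    simp only [hW2b, hW2a, Function.comp_apply, Equiv.prodComm_apply, Prod.fst_swap,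
      Prod.snd_swap]
    congr 1
    by_cases h : cond2 P pq.1 pq.2
    · rw [if_pos h]; exact (if_pos ((hsymm _ _).mp h)).symm
    · rw [if_neg h]; exact (if_neg (fun hc => h ((hsymm _ _).mp hc))).symm
  have hW2bsum : Summable W2b := by
    rw [hswap]
    exact ((Equiv.prodComm (ℤ × ℤ) (ℤ × ℤ)).summable_iff).mpr hW2asum
  have htW2b : ∑' pq, W2b pq ≤ (d : ℝ) * A ^ 2 := by
    rw [hswap]
    calc ∑' pq, (W2a ∘ (Equiv.prodComm (ℤ × ℤ) (ℤ × ℤ))) pq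
        = ∑' pq, W2a pq := (Equiv.prodComm (ℤ × ℤ) (ℤ × ℤ)).tsum_eq W2a
      _ ≤ (d : ℝ) * A ^ 2 := htW2a
  -- pointwise bound
  have hWnn : ∀ pq, 0 ≤ W pq := by
    intro pq
    apply mul_nonneg (mul_nonneg (hunn _) (hunn _))
    split <;> norm_num
  have hptw : ∀ pq, W pq ≤ W1 pq + (2⁻¹ : ℝ) * (W2a pq + W2b pq) := by
    intro pq
    obtain ⟨p, q⟩ := pq
    by_cases h : Mf (p, q) = 0 ∧ Nf P (p, q) = 0
    · have hW1nn : 0 ≤ W1 (p, q) := mul_nonneg (hvnn _) (hvnn _)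
      simp only [hW, if_pos h, mul_one]
      by_cases hdg : p.1 = p.2
      · -- both diagonal
        have hqd : q.1 = q.2 := by
          have := h.1
          simp only [Mf] at this
          omega
        have heq : W1 (p, q) = u p * u q := by
          simp only [hW1, hv, if_pos hdg, if_pos hqd]
        have h2nn : 0 ≤ (2⁻¹ : ℝ) * (W2a (p,q) + W2b (p,q)) := by
          apply mul_nonneg (by norm_num)
          exact add_nonneg (hW2ann _) (hW2bnn _)
        linarith [heq, h2nn]
      · -- off-diagonal
        have hc2 : cond2 P p q := by
          refine ⟨hdg, ?_, ?_⟩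
          · have := h.1; simp only [Mf] at this; omega
          · have := h.2; simp only [Nf] at this; omega
        have ha' : W2a (p, q) = u p ^ 2 := by simp only [hW2a, if_pos hc2, mul_one]
        have hb' : W2b (p, q) = u q ^ 2 := by simp only [hW2b, if_pos hc2, mul_one]
        rw [ha', hb']
        nlinarith [sq_nonneg (u p - u q), hW1nn]
    · simp only [hW, if_neg h, mul_zero]
      have : 0 ≤ W1 (p,q) + (2⁻¹:ℝ) * (W2a (p,q) + W2b (p,q)) := by
        apply add_nonneg (mul_nonneg (hvnn _) (hvnn _))
        apply mul_nonneg (by norm_num)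
        exact add_nonneg (hW2ann _) (hW2bnn _)
      exact this
  have hWeq : (fun pq : (ℤ × ℤ) × (ℤ × ℤ) =>
      (‖a pq.1.1‖ * ‖a pq.1.2‖) * (‖a pq.2.1‖ * ‖a pq.2.2‖) *
        (if Mf pq = 0 ∧ Nf P pq = 0 then (1:ℝ) else 0)) = W := rfl
  have hmaj : Summable (fun pq => W1 pq + (2⁻¹ : ℝ) * (W2a pq + W2b pq)) :=
    hW1sum.add ((hW2asum.add hW2bsum).mul_left _)
  have hWsum : Summable W := Summable.of_nonneg_of_le hWnn hptw hmaj
  refine ⟨hWsum, ?_⟩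
  calc tsum W = ∑' pq, W pq := rfl
    _ ≤ ∑' pq, (W1 pq + (2⁻¹ : ℝ) * (W2a pq + W2b pq)) :=
        Summable.tsum_le_tsum hptw hWsum hmaj
    _ = (∑' pq, W1 pq) + (2⁻¹:ℝ) * ((∑' pq, W2a pq) + (∑' pq, W2b pq)) := by
        rw [Summable.tsum_add hW1sum ((hW2asum.add hW2bsum).mul_left _), tsum_mul_left,
          Summable.tsum_add hW2asum hW2bsum]
    _ ≤ A ^ 2 + (2⁻¹:ℝ) * ((d:ℝ) * A ^ 2 + (d:ℝ) * A ^ 2) := by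
        rw [htW1]
        have : (∑' pq, W2a pq) + (∑' pq, W2b pq) ≤ (d:ℝ) * A ^ 2 + (d:ℝ) * A ^ 2 :=
          add_le_add htW2a htW2b
        nlinarith [this]
    _ = ((d:ℝ) + 1) * A ^ 2 := by ring


private lemma normPow4 (z : ℂ) :
    ‖z‖ ^ 4 = ((z * (starRingEnd ℂ) z) * (starRingEnd ℂ) (z * (starRingEnd ℂ) z)).re := by
  rw [Complex.mul_conj, Complex.ofReal_re, Complex.normSq_mul, Complex.normSq_conj]
  simp only [Complex.normSq_eq_norm_sq]
  ring

private lemma pointwise (P : ℤ[X]) (a : ℤ → ℂ) (ha1 : Summable fun k => ‖a k‖) (x t : ℝ) :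
    ‖∑' k : ℤ, a k * ee k (P.eval k) x t‖ ^ 4
      = (∑' pq : (ℤ × ℤ) × (ℤ × ℤ), Zc a pq * ee (Mf pq) (Nf P pq) x t).re := by
  set f : ℤ → ℂ := fun k => a k * ee k (P.eval k) x t with hf
  set fc : ℤ → ℂ := fun l => (starRingEnd ℂ) (a l) * ee (-l) (-(P.eval l)) x t with hfc
  set f2 : ℤ × ℤ → ℂ :=
    fun p => (a p.1 * (starRingEnd ℂ) (a p.2)) * ee (p.1 - p.2) (P.eval p.1 - P.eval p.2) x t
    with hf2
  set fc2 : ℤ × ℤ → ℂ :=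
    fun q => ((starRingEnd ℂ) (a q.1) * a q.2) *
      ee (-(q.1 - q.2)) (-(P.eval q.1 - P.eval q.2)) x t with hfc2
  have hfn : Summable (fun k => ‖f k‖) := by
    apply ha1.congr
    intro k
    rw [hf]
    rw [norm_mul, ee_norm, mul_one]
  have hfcn : Summable (fun l => ‖fc l‖) := by
    apply ha1.congr
    intro l
    rw [hfc]
    rw [norm_mul, ee_norm, mul_one, RCLike.norm_conj]
  have hu : Summable (fun p : ℤ × ℤ => ‖a p.1‖ * ‖a p.2‖) :=
    ha1.mul_of_nonneg ha1 (fun _ => norm_nonneg _) (fun _ => norm_nonneg _)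
  have hf2n : Summable (fun p : ℤ × ℤ => ‖f2 p‖) := by
    apply hu.congr
    intro p
    rw [hf2]
    rw [norm_mul, ee_norm, mul_one, norm_mul, RCLike.norm_conj]
  have hfc2n : Summable (fun q : ℤ × ℤ => ‖fc2 q‖) := by
    apply hu.congr
    intro q
    rw [hfc2]
    rw [norm_mul, ee_norm, mul_one, norm_mul, RCLike.norm_conj]
  have hconjF : (starRingEnd ℂ) (∑' k, f k) = ∑' l, fc l := by
    rw [show ((starRingEnd ℂ) (∑' k, f k)) = star (∑' k, f k) from rfl, tsum_star]
    apply tsum_congr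
    intro l
    rw [show star (f l) = (starRingEnd ℂ) (f l) from rfl, hf, hfc]
    simp only [map_mul]
    rw [ee_conj]
  have hg : (∑' k, f k) * (starRingEnd ℂ) (∑' k, f k) = ∑' p : ℤ × ℤ, f2 p := by
    rw [hconjF, tsum_mul_tsum_of_summable_norm hfn hfcn]
    apply tsum_congr
    intro p
    rw [hf, hfc, hf2]
    dsimp only
    rw [mul_mul_mul_comm, ee_mul,
      show (p.1 : ℤ) + -p.2 = p.1 - p.2 from (sub_eq_add_neg _ _).symm,
      show P.eval p.1 + -(P.eval p.2) = P.eval p.1 - P.eval p.2 from (sub_eq_add_neg _ _).symm]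
  have hconjg : (starRingEnd ℂ) (∑' p, f2 p) = ∑' q, fc2 q := by
    rw [show ((starRingEnd ℂ) (∑' p, f2 p)) = star (∑' p, f2 p) from rfl, tsum_star]
    apply tsum_congr
    intro q
    rw [show star (f2 q) = (starRingEnd ℂ) (f2 q) from rfl, hf2, hfc2]
    simp only [map_mul, Complex.conj_conj]
    rw [ee_conj]
  have hgg : (∑' p, f2 p) * (starRingEnd ℂ) (∑' p, f2 p)
      = ∑' pq : (ℤ × ℤ) × (ℤ × ℤ), Zc a pq * ee (Mf pq) (Nf P pq) x t := by
    rw [hconjg, tsum_mul_tsum_of_summable_norm hf2n hfc2n]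
    apply tsum_congr
    intro pq
    rw [hf2, hfc2]
    dsimp only
    rw [mul_mul_mul_comm, ee_mul]
    have hZ : (a pq.1.1 * (starRingEnd ℂ) (a pq.1.2)) *
        ((starRingEnd ℂ) (a pq.2.1) * a pq.2.2) = Zc a pq := by
      rw [Zc, map_mul, Complex.conj_conj]
    rw [hZ,
      show pq.1.1 - pq.1.2 + -(pq.2.1 - pq.2.2) = Mf pq from by rw [Mf]; ring,
      show P.eval pq.1.1 - P.eval pq.1.2 + -(P.eval pq.2.1 - P.eval pq.2.2) = Nf P pq from by
        rw [Nf]; ring]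
  rw [normPow4, hg, hgg]


private lemma eeT_cont (m n : ℤ) (x : ℝ) : Continuous (fun t : ℝ => ee m n x t) := by
  unfold ee
  exact Complex.continuous_exp.comp (continuous_const.mul
    (continuous_const.add (continuous_const.mul Complex.continuous_ofReal)))

private lemma expI_cont (m : ℤ) : Continuous (fun x : ℝ => Complex.exp (Complex.I * (m : ℂ) * (x : ℂ))) :=
  Complex.continuous_exp.comp (continuous_const.mul Complex.continuous_ofReal)

private lemma expI_norm (m : ℤ) (x : ℝ) : ‖Complex.exp (Complex.I * (m : ℂ) * (x : ℂ))‖ = 1 := by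
  rw [Complex.norm_exp]
  have : (Complex.I * (m : ℂ) * (x : ℂ)).re = 0 := by
    simp [Complex.mul_re]
  rw [this, Real.exp_zero]

private lemma integralEq (P : ℤ[X]) (a : ℤ → ℂ) (ha1 : Summable fun k => ‖a k‖) :
    (∫ x in Set.Ioc (0:ℝ) (2*π), ∫ t in Set.Ioc (0:ℝ) (2*π),
        ‖∑' k : ℤ, a k *
          Complex.exp (Complex.I * ((k : ℂ) * (x : ℂ) + ((P.eval k : ℤ) : ℂ) * (t : ℂ)))‖ ^ 4)
      = (∑' pq : (ℤ × ℤ) × (ℤ × ℤ), Zc a pq * Jc (Mf pq) * Jc (Nf P pq)).re := by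
  have he : ∀ (k : ℤ) (x t : ℝ),
      Complex.exp (Complex.I * ((k : ℂ) * (x : ℂ) + ((P.eval k : ℤ) : ℂ) * (t : ℂ)))
        = ee k (P.eval k) x t := fun _ _ _ => rfl
  simp only [he]
  have hpt : ∀ x t : ℝ, ‖∑' k : ℤ, a k * ee k (P.eval k) x t‖ ^ 4
      = (∑' pq : (ℤ × ℤ) × (ℤ × ℤ), Zc a pq * ee (Mf pq) (Nf P pq) x t).re :=
    pointwise P a ha1
  simp only [hpt]
  have hu : Summable (fun p : ℤ × ℤ => ‖a p.1‖ * ‖a p.2‖) :=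
    ha1.mul_of_nonneg ha1 (fun _ => norm_nonneg _) (fun _ => norm_nonneg _)
  have hZn : Summable (fun pq : (ℤ × ℤ) × (ℤ × ℤ) => ‖Zc a pq‖) := by
    apply ((hu.mul_of_nonneg hu (fun p => mul_nonneg (norm_nonneg _) (norm_nonneg _))
      (fun p => mul_nonneg (norm_nonneg _) (norm_nonneg _)))).congr
    intro pq
    simp [Zc, norm_mul, RCLike.norm_conj]
  have hZtop : (∑' pq : (ℤ × ℤ) × (ℤ × ℤ), (‖Zc a pq‖₊ : ENNReal)) ≠ ⊤ := by
    rw [ENNReal.tsum_coe_ne_top_iff_summable]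
    apply NNReal.summable_coe.mp
    apply hZn.congr
    intro pq
    rw [coe_nnnorm]
  have hvol : volume (Set.Ioc (0:ℝ) (2*π)) ≠ ⊤ := by
    rw [Real.volume_Ioc]
    exact ENNReal.ofReal_ne_top
  -- inner integral
  have hinner : ∀ x : ℝ,
      (∫ t in Set.Ioc (0:ℝ) (2*π),
          (∑' pq : (ℤ × ℤ) × (ℤ × ℤ), Zc a pq * ee (Mf pq) (Nf P pq) x t))
        = ∑' pq : (ℤ × ℤ) × (ℤ × ℤ),
            (Zc a pq * Complex.exp (Complex.I * (Mf pq : ℂ) * (x : ℂ))) * Jc (Nf P pq) := by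
    intro x
    rw [MeasureTheory.integral_tsum]
    · apply tsum_congr
      intro pq
      have hsplit : ∀ t : ℝ, Zc a pq * ee (Mf pq) (Nf P pq) x t
          = (Zc a pq * Complex.exp (Complex.I * (Mf pq : ℂ) * (x : ℂ))) *
              Complex.exp (Complex.I * (Nf P pq : ℂ) * (t : ℂ)) := by
        intro t
        rw [ee_split]
        ring
      simp only [hsplit]
      rw [MeasureTheory.integral_const_mul, Jval]
    · intro pq
      exact ((continuous_const.mul (eeT_cont (Mf pq) (Nf P pq) x)).aestronglyMeasurable)
    · have hc : ∀ pq : (ℤ × ℤ) × (ℤ × ℤ),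
          (∫⁻ t in Set.Ioc (0:ℝ) (2*π), ‖Zc a pq * ee (Mf pq) (Nf P pq) x t‖₊)
            = (‖Zc a pq‖₊ : ENNReal) * volume (Set.Ioc (0:ℝ) (2*π)) := by
        intro pq
        have hnn : ∀ t : ℝ, (‖Zc a pq * ee (Mf pq) (Nf P pq) x t‖₊ : ENNReal)
            = (‖Zc a pq‖₊ : ENNReal) := by
          intro t
          congr 1
          apply NNReal.coe_injective
          rw [coe_nnnorm, coe_nnnorm, norm_mul, ee_norm, mul_one]
        simp only [hnn]
        rw [MeasureTheory.setLIntegral_const]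
      simp only [enorm_eq_nnnorm, hc]
      rw [ENNReal.tsum_mul_right]
      exact ENNReal.mul_ne_top hZtop hvol
  -- continuity & integrability of the inner tsum
  have hGcont : ∀ x : ℝ, Continuous
      (fun t => ∑' pq : (ℤ × ℤ) × (ℤ × ℤ), Zc a pq * ee (Mf pq) (Nf P pq) x t) := by
    intro x
    apply continuous_tsum (fun pq => continuous_const.mul (eeT_cont (Mf pq) (Nf P pq) x)) hZn
    intro pq t
    simp only [Pi.mul_apply]
    rw [norm_mul, ee_norm, mul_one]
  have hre1 : ∀ x : ℝ,
      (∫ t in Set.Ioc (0:ℝ) (2*π),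
          (∑' pq : (ℤ × ℤ) × (ℤ × ℤ), Zc a pq * ee (Mf pq) (Nf P pq) x t).re)
        = (∑' pq : (ℤ × ℤ) × (ℤ × ℤ),
            (Zc a pq * Complex.exp (Complex.I * (Mf pq : ℂ) * (x : ℂ))) * Jc (Nf P pq)).re := by
    intro x
    have h0 := integral_re (μ := volume.restrict (Set.Ioc (0:ℝ) (2*π)))
      ((hGcont x).integrableOn_Ioc)
    simp only [RCLike.re_to_complex] at h0
    rw [h0, hinner x]
  simp only [hre1]
  -- outer integral
  have hScont : Continuous (fun x : ℝ => ∑' pq : (ℤ × ℤ) × (ℤ × ℤ),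
      (Zc a pq * Complex.exp (Complex.I * (Mf pq : ℂ) * (x : ℂ))) * Jc (Nf P pq)) := by
    apply continuous_tsum
      (fun pq => (continuous_const.mul (expI_cont (Mf pq))).mul continuous_const)
      (hZn.mul_right (2*π))
    intro pq x
    simp only [Pi.mul_apply]
    rw [norm_mul, norm_mul, expI_norm, mul_one]
    exact mul_le_mul_of_nonneg_left (Jc_norm_le _) (norm_nonneg _)
  have houter :
      (∫ x in Set.Ioc (0:ℝ) (2*π), ∑' pq : (ℤ × ℤ) × (ℤ × ℤ),
          (Zc a pq * Complex.exp (Complex.I * (Mf pq : ℂ) * (x : ℂ))) * Jc (Nf P pq))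
        = ∑' pq : (ℤ × ℤ) × (ℤ × ℤ), Zc a pq * Jc (Mf pq) * Jc (Nf P pq) := by
    rw [MeasureTheory.integral_tsum]
    · apply tsum_congr
      intro pq
      have hsh : ∀ x : ℝ,
          (Zc a pq * Complex.exp (Complex.I * (Mf pq : ℂ) * (x : ℂ))) * Jc (Nf P pq)
            = (Zc a pq * Jc (Nf P pq)) * Complex.exp (Complex.I * (Mf pq : ℂ) * (x : ℂ)) := by
        intro x; ring
      simp only [hsh]
      rw [MeasureTheory.integral_const_mul, Jval]
      ring
    · intro pq
      exact (((continuous_const.mul (expI_cont (Mf pq))).mul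
        continuous_const)).aestronglyMeasurable
    · have hcb : ∀ pq : (ℤ × ℤ) × (ℤ × ℤ),
          (∫⁻ x in Set.Ioc (0:ℝ) (2*π),
              ‖(Zc a pq * Complex.exp (Complex.I * (Mf pq : ℂ) * (x : ℂ))) * Jc (Nf P pq)‖₊)
            ≤ (‖Zc a pq‖₊ : ENNReal) * ENNReal.ofReal (2*π) * volume (Set.Ioc (0:ℝ) (2*π)) := by
        intro pq
        have hb : ∀ x : ℝ,
            (‖(Zc a pq * Complex.exp (Complex.I * (Mf pq : ℂ) * (x : ℂ))) * Jc (Nf P pq)‖₊ :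
                ENNReal)
              ≤ (‖Zc a pq‖₊ : ENNReal) * ENNReal.ofReal (2*π) := by
          intro x
          rw [← ENNReal.ofReal_coe_nnreal, coe_nnnorm, ← ENNReal.ofReal_coe_nnreal, coe_nnnorm,
            ← ENNReal.ofReal_mul (norm_nonneg _)]
          apply ENNReal.ofReal_le_ofReal
          rw [norm_mul, norm_mul, expI_norm, mul_one]
          exact mul_le_mul_of_nonneg_left (Jc_norm_le _) (norm_nonneg _)
        calc (∫⁻ x in Set.Ioc (0:ℝ) (2*π),
              ‖(Zc a pq * Complex.exp (Complex.I * (Mf pq : ℂ) * (x : ℂ))) * Jc (Nf P pq)‖₊)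
            ≤ ∫⁻ _ in Set.Ioc (0:ℝ) (2*π), (‖Zc a pq‖₊ : ENNReal) * ENNReal.ofReal (2*π) :=
              MeasureTheory.lintegral_mono (fun x => hb x)
          _ = (‖Zc a pq‖₊ : ENNReal) * ENNReal.ofReal (2*π) * volume (Set.Ioc (0:ℝ) (2*π)) :=
              MeasureTheory.setLIntegral_const _ _
      apply ne_top_of_le_ne_top _ (ENNReal.tsum_le_tsum hcb)
      rw [ENNReal.tsum_mul_right, ENNReal.tsum_mul_right]
      exact ENNReal.mul_ne_top (ENNReal.mul_ne_top hZtop ENNReal.ofReal_ne_top) hvol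
  have h1 := integral_re (μ := volume.restrict (Set.Ioc (0:ℝ) (2*π)))
    (hScont.integrableOn_Ioc)
  simp only [RCLike.re_to_complex] at h1
  rw [h1, houter]

end StmtAux

open MeasureTheory Real

/-- `L⁴(𝕋²)` Strichartz (Zygmund-type) estimate: for a monic integer polynomial `P` of
degree `d ≥ 2`, `‖∑_k a_k e^{i(kx + P(k)t)}‖_{L⁴(𝕋²)} ≤ C (∑_k |a_k|²)^{1/2}`. -/
theorem stmt4 (d : ℕ) (hd : 2 ≤ d) (P : Polynomial ℤ) (hP : P.Monic)
    (hdeg : P.natDegree = d) :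
    ∃ C : ℝ, 0 < C ∧ ∀ a : ℤ → ℂ, Summable (fun k => ‖a k‖ ^ 2) →
      (∫ x in Set.Ioc (0:ℝ) (2*π), ∫ t in Set.Ioc (0:ℝ) (2*π),
          ‖∑' k : ℤ, a k *
            Complex.exp (Complex.I * ((k : ℂ) * (x : ℂ) + ((P.eval k : ℤ) : ℂ) * (t : ℂ)))‖ ^ 4)
          ^ ((1:ℝ)/4)
        ≤ C * (∑' k : ℤ, ‖a k‖ ^ 2) ^ ((1:ℝ)/2) := by
  refine ⟨((2*π)^2 * ((d:ℝ)+1)) ^ ((1:ℝ)/4), by positivity, ?_⟩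
  intro a ha2
  set A : ℝ := ∑' k : ℤ, ‖a k‖ ^ 2 with hA
  have hA0 : 0 ≤ A := tsum_nonneg (fun k => sq_nonneg _)
  have hRHSnn : 0 ≤ ((2*π)^2 * ((d:ℝ)+1)) ^ ((1:ℝ)/4) * A ^ ((1:ℝ)/2) := by positivity
  by_cases ha1 : Summable (fun k : ℤ => ‖a k‖)
  · -- absolutely convergent case
    have hInn : (0:ℝ) ≤ ∫ x in Set.Ioc (0:ℝ) (2*π), ∫ t in Set.Ioc (0:ℝ) (2*π),
        ‖∑' k : ℤ, a k *
          Complex.exp (Complex.I * ((k : ℂ) * (x : ℂ) + ((P.eval k : ℤ) : ℂ) * (t : ℂ)))‖ ^ 4 :=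
      MeasureTheory.integral_nonneg (fun x =>
        MeasureTheory.integral_nonneg (fun t => by positivity))
    have hint := integralEq P a ha1
    rw [hint] at hInn ⊢
    obtain ⟨hWsum, hWle⟩ := keyBound d hd P hdeg a ha2
    rw [← hA] at hWle
    have hZeq : ∀ pq : (ℤ × ℤ) × (ℤ × ℤ),
        ‖Zc a pq‖ = (‖a pq.1.1‖ * ‖a pq.1.2‖) * (‖a pq.2.1‖ * ‖a pq.2.2‖) := by
      intro pq
      simp [Zc, norm_mul, RCLike.norm_conj]
    have hptle : ∀ pq : (ℤ × ℤ) × (ℤ × ℤ),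
        ‖Zc a pq * Jc (Mf pq) * Jc (Nf P pq)‖
          ≤ (2*π)^2 * ((‖a pq.1.1‖ * ‖a pq.1.2‖) * (‖a pq.2.1‖ * ‖a pq.2.2‖) *
              (if Mf pq = 0 ∧ Nf P pq = 0 then (1:ℝ) else 0)) := by
      intro pq
      by_cases h : Mf pq = 0 ∧ Nf P pq = 0
      · rw [if_pos h, mul_one]
        have hJM : Jc (Mf pq) = ((2*π:ℝ):ℂ) := by rw [Jc, if_pos h.1]
        have hJN : Jc (Nf P pq) = ((2*π:ℝ):ℂ) := by rw [Jc, if_pos h.2]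
        rw [hJM, hJN]
        have heq : ‖Zc a pq * ((2*π:ℝ):ℂ) * ((2*π:ℝ):ℂ)‖
            = (2*π)^2 * ((‖a pq.1.1‖ * ‖a pq.1.2‖) * (‖a pq.2.1‖ * ‖a pq.2.2‖)) := by
          simp only [norm_mul, Complex.norm_real, Real.norm_eq_abs,
            abs_of_nonneg (show (0:ℝ) ≤ 2*π by positivity), hZeq pq]
          rw [abs_of_nonneg (show (0:ℝ) ≤ 2 by norm_num), abs_of_nonneg Real.pi_nonneg]
          ring
        rw [heq]
      · rw [if_neg h, mul_zero, mul_zero]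
        have hzero : Zc a pq * Jc (Mf pq) * Jc (Nf P pq) = 0 := by
          rcases not_and_or.mp h with h' | h'
          · rw [show Jc (Mf pq) = 0 from by rw [Jc, if_neg h']]; ring
          · rw [show Jc (Nf P pq) = 0 from by rw [Jc, if_neg h']]; ring
        rw [hzero, norm_zero]
    have hmaj : Summable (fun pq : (ℤ × ℤ) × (ℤ × ℤ) =>
        (2*π)^2 * ((‖a pq.1.1‖ * ‖a pq.1.2‖) * (‖a pq.2.1‖ * ‖a pq.2.2‖) *
          (if Mf pq = 0 ∧ Nf P pq = 0 then (1:ℝ) else 0))) := hWsum.mul_left _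
    have hnormsum : Summable (fun pq : (ℤ × ℤ) × (ℤ × ℤ) =>
        ‖Zc a pq * Jc (Mf pq) * Jc (Nf P pq)‖) :=
      Summable.of_nonneg_of_le (fun pq => norm_nonneg _) hptle hmaj
    have hTle : (∑' pq : (ℤ × ℤ) × (ℤ × ℤ), Zc a pq * Jc (Mf pq) * Jc (Nf P pq)).re
        ≤ (2*π)^2 * (((d:ℝ)+1) * A^2) := by
      calc (∑' pq : (ℤ × ℤ) × (ℤ × ℤ), Zc a pq * Jc (Mf pq) * Jc (Nf P pq)).re
          ≤ ‖∑' pq : (ℤ × ℤ) × (ℤ × ℤ), Zc a pq * Jc (Mf pq) * Jc (Nf P pq)‖ :=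
            Complex.re_le_norm _
        _ = ‖∑' pq : (ℤ × ℤ) × (ℤ × ℤ), Zc a pq * Jc (Mf pq) * Jc (Nf P pq)‖ :=
            rfl
        _ ≤ ∑' pq : (ℤ × ℤ) × (ℤ × ℤ), ‖Zc a pq * Jc (Mf pq) * Jc (Nf P pq)‖ :=
            norm_tsum_le_tsum_norm hnormsum
        _ ≤ ∑' pq : (ℤ × ℤ) × (ℤ × ℤ), (2*π)^2 * ((‖a pq.1.1‖ * ‖a pq.1.2‖) *
              (‖a pq.2.1‖ * ‖a pq.2.2‖) * (if Mf pq = 0 ∧ Nf P pq = 0 then (1:ℝ) else 0)) :=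
            Summable.tsum_le_tsum hptle hnormsum hmaj
        _ = (2*π)^2 * ∑' pq : (ℤ × ℤ) × (ℤ × ℤ), ((‖a pq.1.1‖ * ‖a pq.1.2‖) *
              (‖a pq.2.1‖ * ‖a pq.2.2‖) * (if Mf pq = 0 ∧ Nf P pq = 0 then (1:ℝ) else 0)) :=
            tsum_mul_left
        _ ≤ (2*π)^2 * (((d:ℝ)+1) * A^2) := by
            apply mul_le_mul_of_nonneg_left _ (by positivity)
            exact hWle
    calc (∑' pq : (ℤ × ℤ) × (ℤ × ℤ), Zc a pq * Jc (Mf pq) * Jc (Nf P pq)).re ^ ((1:ℝ)/4)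
        ≤ ((2*π)^2 * (((d:ℝ)+1) * A^2)) ^ ((1:ℝ)/4) :=
          Real.rpow_le_rpow hInn hTle (by norm_num)
      _ = ((2*π)^2 * ((d:ℝ)+1)) ^ ((1:ℝ)/4) * (A^2) ^ ((1:ℝ)/4) := by
          rw [← mul_assoc, Real.mul_rpow (by positivity) (sq_nonneg _)]
      _ = ((2*π)^2 * ((d:ℝ)+1)) ^ ((1:ℝ)/4) * A ^ ((1:ℝ)/2) := by
          congr 1
          rw [← Real.rpow_natCast A 2, ← Real.rpow_mul hA0]
          norm_num
  · -- degenerate case: the series is not absolutely summable, so the tsum vanishes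
    have hz : ∀ x t : ℝ, (∑' k : ℤ, a k *
        Complex.exp (Complex.I * ((k : ℂ) * (x : ℂ) + ((P.eval k : ℤ) : ℂ) * (t : ℂ)))) = 0 := by
      intro x t
      apply tsum_eq_zero_of_not_summable
      intro hs
      apply ha1
      have hns := summable_norm_iff.mpr hs
      apply hns.congr
      intro k
      rw [norm_mul,
        show Complex.exp (Complex.I * ((k : ℂ) * (x : ℂ) + ((P.eval k : ℤ) : ℂ) * (t : ℂ)))
          = ee k (P.eval k) x t from rfl, ee_norm, mul_one]
    have h0 : (∫ x in Set.Ioc (0:ℝ) (2*π), ∫ t in Set.Ioc (0:ℝ) (2*π),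
        ‖∑' k : ℤ, a k *
          Complex.exp (Complex.I * ((k : ℂ) * (x : ℂ) + ((P.eval k : ℤ) : ℂ) * (t : ℂ)))‖ ^ 4)
        = 0 := by
      simp [hz]
    rw [h0, Real.zero_rpow (by norm_num : (1:ℝ)/4 ≠ 0)]
    exact hRHSnn
end
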